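/- arXiv:1505.03257 — 6 statements merged into one kernel-verified Lean document; each statement's English description precedes it below -/
import Mathlib

section
/- Consider the flipped logistic regression link function with intercept ζ = 0 and flipping probability p_e ∈ [0, 1/2), namely f(z) = (e^z − 1)/(e^z + 1) + 2p_e·(1 − e^z)/(1 + e^z) = (1 − 2p_e)·(e^z − 1)/(e^z + 1). Then μ₀ = μ₂ = 0, μ₁ = (1 − 2p_e)·E[2e^Z/(1 + e^Z)²] for Z ~ N(0,1), and consequently there exists an absolute constant C > 0 such that φ(f) = μ₁² ≥ C(1 − 2p_e)² > 0. -/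
open MeasureTheory ProbabilityTheory Real

/-- The Gaussian moments `μ_k = E[f(Z) Z^k]` for `Z ~ N(0,1)`. -/
noncomputable def gaussMoment (f : ℝ → ℝ) (k : ℕ) : ℝ :=
  ∫ z, f z * z ^ k ∂(gaussianReal 0 1)

/-- `φ(f) = μ₁² − μ₀μ₂ + μ₀²`. -/
noncomputable def phiFun (f : ℝ → ℝ) : ℝ :=
  gaussMoment f 1 ^ 2 - gaussMoment f 0 * gaussMoment f 2 + gaussMoment f 0 ^ 2

section Aux
open Filter
open scoped ENNReal NNReal

noncomputable def Gfun : ℝ → ℝ := fun z => (rexp z - 1) / (rexp z + 1)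

lemma pdf_eq' : gaussianPDFReal 0 1 = fun z => (√(2*π))⁻¹ * rexp (-(z^2)/2) := by
  ext z; simp [gaussianPDFReal]

lemma integral_gaussianReal_eq (g : ℝ → ℝ) :
    ∫ z, g z ∂(gaussianReal 0 1) = ∫ z, gaussianPDFReal 0 1 z * g z := by
  rw [gaussianReal_of_var_ne_zero 0 one_ne_zero]
  have h : gaussianPDF 0 1 = fun x => ((gaussianPDFReal 0 1 x).toNNReal : ℝ≥0∞) := rfl
  rw [h, integral_withDensity_eq_integral_smul
    ((measurable_gaussianPDFReal 0 1).real_toNNReal) g]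
  congr 1; ext x
  rw [NNReal.smul_def, Real.coe_toNNReal _ (gaussianPDFReal_nonneg 0 1 x), smul_eq_mul]

lemma pdf_even (z : ℝ) : gaussianPDFReal 0 1 (-z) = gaussianPDFReal 0 1 z := by
  simp [gaussianPDFReal]

lemma integral_odd (h : ℝ → ℝ) (hodd : ∀ z, h (-z) = - h z) :
    ∫ z, gaussianPDFReal 0 1 z * h z = 0 := by
  set F : ℝ → ℝ := fun z => gaussianPDFReal 0 1 z * h z with hF
  have key : ∫ z, F (-z) = ∫ z, F z :=
    (Measure.measurePreserving_neg (volume : Measure ℝ)).integral_comp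
      (Homeomorph.neg ℝ).measurableEmbedding F
  have h2 : ∀ z, F (-z) = - F z := fun z => by
    simp only [hF, pdf_even, hodd]; ring
  simp only [h2, integral_neg] at key
  linarith

lemma Gfun_deriv (z : ℝ) : HasDerivAt Gfun (2 * rexp z / (1 + rexp z)^2) z := by
  have h1 : HasDerivAt (fun z => rexp z - 1) (rexp z) z := (Real.hasDerivAt_exp z).sub_const 1
  have h2 : HasDerivAt (fun z => rexp z + 1) (rexp z) z := (Real.hasDerivAt_exp z).add_const 1
  have hne : rexp z + 1 ≠ 0 := by positivity
  have := h1.div h2 hne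
  refine this.congr_deriv ?_
  field_simp
  ring

lemma Gfun_abs_le (z : ℝ) : |Gfun z| ≤ 1 := by
  have h := exp_pos z
  rw [Gfun, abs_div, abs_of_pos (by linarith : (0:ℝ) < rexp z + 1), div_le_one (by linarith)]
  rw [abs_le]; constructor <;> linarith

lemma Gfun_odd (z : ℝ) : Gfun (-z) = - Gfun z := by
  have h := exp_pos z
  simp only [Gfun, Real.exp_neg]
  field_simp
  ring

lemma pdf_deriv (z : ℝ) :
    HasDerivAt (gaussianPDFReal 0 1) (-z * gaussianPDFReal 0 1 z) z := by
  rw [pdf_eq']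
  have h1 : HasDerivAt (fun z : ℝ => -(z^2)/2) (-z) z := by
    have := ((hasDerivAt_pow 2 z).neg).div_const 2
    refine this.congr_deriv ?_
    norm_num; ring
  have h2 := (Real.hasDerivAt_exp (-(z^2)/2)).comp z h1
  have := h2.const_mul (√(2*π))⁻¹
  refine this.congr_deriv ?_
  simp only [Function.comp_def]
  ring

lemma pdf_tendsto_atTop : Tendsto (gaussianPDFReal 0 1) atTop (nhds 0) := by
  rw [pdf_eq']
  rw [show (0:ℝ) = (√(2*π))⁻¹ * 0 by ring]
  apply Tendsto.const_mul
  apply Real.tendsto_exp_atBot.comp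
  have h1 : Tendsto (fun z : ℝ => z ^ 2) atTop atTop := tendsto_pow_atTop two_ne_zero
  have h2 : Tendsto (fun z : ℝ => z ^ 2 / 2) atTop atTop := h1.atTop_div_const two_pos
  simp only [neg_div]
  exact Filter.tendsto_neg_atBot_iff.mpr h2

lemma pdf_tendsto_atBot : Tendsto (gaussianPDFReal 0 1) atBot (nhds 0) := by
  have h := pdf_tendsto_atTop.comp tendsto_neg_atBot_atTop
  have : (gaussianPDFReal 0 1) ∘ (fun z : ℝ => -z) = gaussianPDFReal 0 1 := by
    ext z; exact pdf_even z
  rwa [this] at h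

lemma majorant_integrable :
    Integrable (fun z : ℝ => (|z| + 2) * gaussianPDFReal 0 1 z) := by
  have hmaj : Integrable (fun z : ℝ => (4 * (√(2*π))⁻¹) * rexp (-(1/4 : ℝ) * z^2)) :=
    (integrable_exp_neg_mul_sq (by norm_num : (0:ℝ) < 1/4)).const_mul _
  refine hmaj.mono' ?_ ?_
  · exact ((measurable_id.abs.add_const 2).mul (measurable_gaussianPDFReal 0 1)).aestronglyMeasurable
  · refine Eventually.of_forall fun z => ?_
    have hc : (0:ℝ) ≤ (√(2*π))⁻¹ := by positivity
    have hnn : 0 ≤ (|z| + 2) * gaussianPDFReal 0 1 z := by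
      have := gaussianPDFReal_nonneg 0 1 z
      have := abs_nonneg z
      positivity
    rw [Real.norm_eq_abs, abs_of_nonneg hnn, pdf_eq']
    have h1 : |z| + 2 ≤ 4 * rexp (z^2/4) := by
      have h2 := Real.add_one_le_exp (z^2/4)
      nlinarith [abs_nonneg z, sq_abs z]
    calc (|z| + 2) * ((√(2*π))⁻¹ * rexp (-(z^2)/2))
        ≤ (4 * rexp (z^2/4)) * ((√(2*π))⁻¹ * rexp (-(z^2)/2)) := by
          apply mul_le_mul_of_nonneg_right h1 (by positivity)
      _ = (4 * (√(2*π))⁻¹) * (rexp (z^2/4) * rexp (-(z^2)/2)) := by ring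
      _ = (4 * (√(2*π))⁻¹) * rexp (-(1/4:ℝ) * z^2) := by
          rw [← Real.exp_add, show z^2/4 + -(z^2)/2 = -(1/4:ℝ)*z^2 from by ring]

lemma gprime_bounds (z : ℝ) : 0 ≤ 2 * rexp z / (1 + rexp z)^2 ∧ 2 * rexp z / (1 + rexp z)^2 ≤ 2 := by
  have h := exp_pos z
  constructor
  · positivity
  · rw [div_le_iff₀ (by positivity)]
    nlinarith

lemma int1 : Integrable (fun z : ℝ => gaussianPDFReal 0 1 z * (2 * rexp z / (1 + rexp z)^2)) := by
  refine majorant_integrable.mono' ?_ ?_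
  · apply Measurable.aestronglyMeasurable
    exact (measurable_gaussianPDFReal 0 1).mul
      ((measurable_exp.const_mul 2).div ((measurable_exp.const_add 1).pow_const 2))
  · refine Eventually.of_forall fun z => ?_
    have hp := gaussianPDFReal_nonneg 0 1 z
    obtain ⟨h0, h2⟩ := gprime_bounds z
    rw [Real.norm_eq_abs, abs_of_nonneg (by positivity)]
    have : gaussianPDFReal 0 1 z * (2 * rexp z / (1 + rexp z)^2) ≤ gaussianPDFReal 0 1 z * 2 :=
      mul_le_mul_of_nonneg_left h2 hp
    nlinarith [abs_nonneg z]

lemma int2 : Integrable (fun z : ℝ => Gfun z * (-z * gaussianPDFReal 0 1 z)) := by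
  refine majorant_integrable.mono' ?_ ?_
  · apply Measurable.aestronglyMeasurable
    have hG : Measurable Gfun := (measurable_exp.sub_const 1).div (measurable_exp.add_const 1)
    exact hG.mul (measurable_id.neg.mul (measurable_gaussianPDFReal 0 1))
  · refine Eventually.of_forall fun z => ?_
    have hp := gaussianPDFReal_nonneg 0 1 z
    have hG := Gfun_abs_le z
    rw [Real.norm_eq_abs, abs_mul, abs_mul, abs_neg, abs_of_nonneg hp]
    have h1 : |Gfun z| * (|z| * gaussianPDFReal 0 1 z) ≤ 1 * (|z| * gaussianPDFReal 0 1 z) := by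
      apply mul_le_mul_of_nonneg_right hG
      positivity
    nlinarith [abs_nonneg z]

lemma stein :
    ∫ z, gaussianPDFReal 0 1 z * (Gfun z * z)
      = ∫ z, gaussianPDFReal 0 1 z * (2 * rexp z / (1 + rexp z)^2) := by
  set F : ℝ → ℝ := fun z => Gfun z * gaussianPDFReal 0 1 z with hFdef
  have hderiv : ∀ z, HasDerivAt F
      (2 * rexp z / (1 + rexp z)^2 * gaussianPDFReal 0 1 z
        + Gfun z * (-z * gaussianPDFReal 0 1 z)) z :=
    fun z => (Gfun_deriv z).mul (pdf_deriv z)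
  have e1 : (fun z : ℝ => 2 * rexp z / (1 + rexp z)^2 * gaussianPDFReal 0 1 z)
      = fun z : ℝ => gaussianPDFReal 0 1 z * (2 * rexp z / (1 + rexp z)^2) := by
    ext z; ring
  have hint1 : Integrable (fun z : ℝ => 2 * rexp z / (1 + rexp z)^2 * gaussianPDFReal 0 1 z) := by
    rw [e1]; exact int1
  have hintF' : Integrable (fun z : ℝ =>
      2 * rexp z / (1 + rexp z)^2 * gaussianPDFReal 0 1 z
        + Gfun z * (-z * gaussianPDFReal 0 1 z)) := hint1.add int2
  have hbound : ∀ z : ℝ, |F z| ≤ gaussianPDFReal 0 1 z := by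
    intro z
    have hp := gaussianPDFReal_nonneg 0 1 z
    rw [hFdef]
    simp only
    rw [abs_mul, abs_of_nonneg hp]
    nlinarith [Gfun_abs_le z, abs_nonneg (Gfun z)]
  have htop : Tendsto F atTop (nhds 0) := by
    apply tendsto_of_tendsto_of_tendsto_of_le_of_le (neg_zero (G := ℝ) ▸ pdf_tendsto_atTop.neg) pdf_tendsto_atTop
    · intro z; show -gaussianPDFReal 0 1 z ≤ F z
      have := hbound z; have := neg_abs_le (F z); linarith
    · intro z; have := hbound z; have := le_abs_self (F z); linarith
  have hbot : Tendsto F atBot (nhds 0) := by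
    apply tendsto_of_tendsto_of_tendsto_of_le_of_le (neg_zero (G := ℝ) ▸ pdf_tendsto_atBot.neg) pdf_tendsto_atBot
    · intro z; show -gaussianPDFReal 0 1 z ≤ F z
      have := hbound z; have := neg_abs_le (F z); linarith
    · intro z; have := hbound z; have := le_abs_self (F z); linarith
  have h0 : ∫ z, (2 * rexp z / (1 + rexp z)^2 * gaussianPDFReal 0 1 z
      + Gfun z * (-z * gaussianPDFReal 0 1 z)) = 0 := by
    rw [integral_of_hasDerivAt_of_tendsto hderiv hintF' hbot htop]
    simp
  rw [integral_add hint1 int2, e1] at h0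
  have h3 : ∫ z, Gfun z * (-z * gaussianPDFReal 0 1 z)
      = - ∫ z, gaussianPDFReal 0 1 z * (Gfun z * z) := by
    rw [← integral_neg]
    congr 1; ext z; ring
  rw [h3] at h0
  linarith

lemma I_pos : 0 < ∫ z, gaussianPDFReal 0 1 z * (2 * rexp z / (1 + rexp z)^2) := by
  rw [integral_pos_iff_support_of_nonneg_ae ?_ int1]
  · have hs : Function.support (fun z : ℝ => gaussianPDFReal 0 1 z * (2 * rexp z / (1 + rexp z)^2))
        = Set.univ := by
      apply Set.eq_univ_of_forall
      intro z
      have h1 := gaussianPDFReal_pos 0 1 z one_ne_zero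
      have h2 := exp_pos z
      have : 0 < gaussianPDFReal 0 1 z * (2 * rexp z / (1 + rexp z)^2) := by positivity
      exact this.ne'
    rw [hs]
    simp
  · refine Eventually.of_forall fun z => ?_
    have hp := gaussianPDFReal_nonneg 0 1 z
    have h2 := exp_pos z
    positivity

end Aux

/-- For the flipped logistic regression link function with intercept `ζ = 0` and
flipping probability `p_e ∈ [0, 1/2)`, i.e.
`f(z) = (e^z − 1)/(e^z + 1) + 2 p_e (1 − e^z)/(1 + e^z)`, one has `μ₀ = μ₂ = 0`,
`μ₁ = (1 − 2 p_e)·E[2e^Z/(1+e^Z)²]`, and there is an absolute constant `C > 0` with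
`φ(f) = μ₁² ≥ C (1 − 2 p_e)² > 0`. -/
theorem flipped_logistic_phi_pos :
    ∃ C : ℝ, 0 < C ∧ ∀ pe : ℝ, 0 ≤ pe → pe < 1 / 2 →
      ∀ f : ℝ → ℝ,
        (f = fun z => (Real.exp z - 1) / (Real.exp z + 1)
            + 2 * pe * ((1 - Real.exp z) / (1 + Real.exp z))) →
        gaussMoment f 0 = 0 ∧ gaussMoment f 2 = 0 ∧
        gaussMoment f 1
          = (1 - 2 * pe) * ∫ z, 2 * Real.exp z / (1 + Real.exp z) ^ 2 ∂(gaussianReal 0 1) ∧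
        phiFun f = gaussMoment f 1 ^ 2 ∧
        C * (1 - 2 * pe) ^ 2 ≤ phiFun f ∧
        0 < phiFun f := by
  have hK : (∫ z, 2 * Real.exp z / (1 + Real.exp z) ^ 2 ∂(gaussianReal 0 1))
      = ∫ z, gaussianPDFReal 0 1 z * (2 * rexp z / (1 + rexp z)^2) :=
    integral_gaussianReal_eq _
  have hKpos : 0 < ∫ z, 2 * Real.exp z / (1 + Real.exp z) ^ 2 ∂(gaussianReal 0 1) := by
    rw [hK]; exact I_pos
  refine ⟨(∫ z, 2 * Real.exp z / (1 + Real.exp z) ^ 2 ∂(gaussianReal 0 1))^2,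
    pow_pos hKpos 2, ?_⟩
  intro pe hpe0 hpe2 f hf
  have hpe : 0 < 1 - 2 * pe := by linarith
  have hf' : f = fun z => (1 - 2 * pe) * Gfun z := by
    rw [hf]; ext z
    have h := exp_pos z
    simp only [Gfun]
    field_simp
    ring
  have hmom : ∀ k : ℕ, gaussMoment f k
      = (1 - 2 * pe) * ∫ z, gaussianPDFReal 0 1 z * (Gfun z * z^k) := by
    intro k
    rw [gaussMoment, hf']
    simp_rw [mul_assoc]
    rw [integral_const_mul, integral_gaussianReal_eq]
  have h0 : gaussMoment f 0 = 0 := by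
    rw [hmom 0, integral_odd _ (fun z => by simp [Gfun_odd]), mul_zero]
  have h2 : gaussMoment f 2 = 0 := by
    rw [hmom 2, integral_odd _ (fun z => by simp [Gfun_odd]), mul_zero]
  have h1 : gaussMoment f 1
      = (1 - 2 * pe) * ∫ z, 2 * Real.exp z / (1 + Real.exp z) ^ 2 ∂(gaussianReal 0 1) := by
    rw [hmom 1, hK]
    congr 1
    simp_rw [pow_one]
    exact stein
  have hphi : phiFun f = gaussMoment f 1 ^ 2 := by
    rw [phiFun, h0]; ring
  refine ⟨h0, h2, h1, hphi, ?_, ?_⟩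
  · rw [hphi, h1]
    exact le_of_eq (by ring)
  · rw [hphi, h1]
    positivity
end

section
/- Consider the robust one-bit compressed sensing link function f(z) = 2·P(z + ε > 0) − 1 where ε ~ N(0, σ²) with σ > 0 (equivalently f(z) = 2Φ(z/σ) − 1 with Φ the standard Gaussian CDF). Then f is odd, so μ₀ = μ₂ = 0, and μ₁ ≥ √(2/π)·(1 − σ²)/(1 + σ²). Consequently, for σ² < 1/2, φ(f) = μ₁² ≥ (2/π)·((1 − σ²)/(1 + σ²))² > 0. -/
open MeasureTheory ProbabilityTheory Real

namespace RobustOneBitAux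

open Set Filter

lemma gauss_integral_eq {v : NNReal} (hv : v ≠ 0) (g : ℝ → ℝ) :
    ∫ x, g x ∂(gaussianReal 0 v) = ∫ x, gaussianPDFReal 0 v x * g x := by
  rw [gaussianReal_of_var_ne_zero _ hv, gaussianPDF_def]
  have : (fun x => ENNReal.ofReal (gaussianPDFReal 0 v x))
      = fun x => ((Real.toNNReal (gaussianPDFReal 0 v x) : NNReal) : ENNReal) := rfl
  rw [this, integral_withDensity_eq_integral_smul
    ((measurable_gaussianPDFReal 0 v).real_toNNReal) g]
  congr 1 with x
  simp [NNReal.smul_def, Real.coe_toNNReal _ (gaussianPDFReal_nonneg 0 v x)]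

lemma gauss_setIntegral_eq {v : NNReal} (hv : v ≠ 0) (g : ℝ → ℝ) {s : Set ℝ}
    (hs : MeasurableSet s) :
    ∫ x in s, g x ∂(gaussianReal 0 v) = ∫ x in s, gaussianPDFReal 0 v x * g x := by
  rw [gaussianReal_of_var_ne_zero _ hv, gaussianPDF_def]
  have : (fun x => ENNReal.ofReal (gaussianPDFReal 0 v x))
      = fun x => ((Real.toNNReal (gaussianPDFReal 0 v x) : NNReal) : ENNReal) := rfl
  rw [this, setIntegral_withDensity_eq_setIntegral_smul
    ((measurable_gaussianPDFReal 0 v).real_toNNReal) g hs]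
  congr 1 with x
  simp [NNReal.smul_def, Real.coe_toNNReal _ (gaussianPDFReal_nonneg 0 v x)]

lemma gauss_integrable_iff {v : NNReal} (hv : v ≠ 0) (g : ℝ → ℝ) :
    Integrable g (gaussianReal 0 v) ↔
      Integrable (fun x => gaussianPDFReal 0 v x * g x) := by
  rw [gaussianReal_of_var_ne_zero _ hv, gaussianPDF_def]
  have : (fun x => ENNReal.ofReal (gaussianPDFReal 0 v x))
      = fun x => ((Real.toNNReal (gaussianPDFReal 0 v x) : NNReal) : ENNReal) := rfl
  rw [this, integrable_withDensity_iff_integrable_smul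
    ((measurable_gaussianPDFReal 0 v).real_toNNReal)]
  constructor <;> intro h <;> refine h.congr (Filter.Eventually.of_forall fun x => ?_) <;>
    simp [NNReal.smul_def, Real.coe_toNNReal _ (gaussianPDFReal_nonneg 0 v x)]

lemma gauss_map_neg (v : NNReal) :
    (gaussianReal 0 v).map (fun x => -x) = gaussianReal 0 v := by
  have h := gaussianReal_map_const_mul (μ := 0) (v := v) (-1)
  have : ((fun x => -1 * x) : ℝ → ℝ) = fun x => -x := by funext x; ring
  rw [this] at h
  rw [h]
  norm_num

lemma gauss_integral_odd_eq_zero (v : NNReal) {g : ℝ → ℝ} (hg : Measurable g)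
    (hodd : ∀ x, g (-x) = -g x) :
    ∫ x, g x ∂(gaussianReal 0 v) = 0 := by
  have h1 : ∫ x, g x ∂(gaussianReal 0 v)
      = ∫ x, g (-x) ∂(gaussianReal 0 v) := by
    conv_lhs => rw [← gauss_map_neg v]
    rw [integral_map (by fun_prop) hg.aestronglyMeasurable]
  have h2 : ∫ x, g (-x) ∂(gaussianReal 0 v) = - ∫ x, g x ∂(gaussianReal 0 v) := by
    simp_rw [hodd]
    exact integral_neg g
  linarith [h1, h2]

lemma pdf1_eq (x : ℝ) : gaussianPDFReal 0 1 x = (√(2 * π))⁻¹ * rexp (-x ^ 2 / 2) := by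
  simp [gaussianPDFReal]

lemma integrable_id_mul_exp {b : ℝ} (hb : 0 < b) :
    Integrable (fun x : ℝ => x * rexp (-b * x ^ 2)) := by
  have h := integrable_rpow_mul_exp_neg_mul_sq hb (by norm_num : (-1 : ℝ) < 1)
  simpa [Real.rpow_one] using h

lemma integrable_pdf1_mul_id : Integrable (fun x : ℝ => gaussianPDFReal 0 1 x * x) := by
  have h := (integrable_id_mul_exp (by norm_num : (0:ℝ) < 1/2)).const_mul ((√(2 * π))⁻¹)
  refine h.congr (Filter.Eventually.of_forall fun x => ?_)
  simp only [pdf1_eq]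
  ring_nf

lemma ftc_gauss (a : ℝ) :
    ∫ z in Ioi a, gaussianPDFReal 0 1 z * z = gaussianPDFReal 0 1 a := by
  have c0 : (0:ℝ) < (√(2 * π))⁻¹ := by positivity
  have hderiv : ∀ x ∈ Ici a, HasDerivAt (fun z : ℝ => -((√(2 * π))⁻¹ * rexp (-z ^ 2 / 2)))
      (gaussianPDFReal 0 1 x * x) x := by
    intro x _
    have h1 : HasDerivAt (fun z : ℝ => -z ^ 2 / 2) (-x) x := by
      have := ((hasDerivAt_pow 2 x).neg).div_const 2
      simpa using this.congr_deriv (by push_cast; ring)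
    have := ((h1.exp.const_mul ((√(2 * π))⁻¹)).neg)
    rw [pdf1_eq]
    exact this.congr_deriv (by ring)
  have hint : IntegrableOn (fun z => gaussianPDFReal 0 1 z * z) (Ioi a) :=
    integrable_pdf1_mul_id.integrableOn
  have htend : Tendsto (fun z : ℝ => -((√(2 * π))⁻¹ * rexp (-z ^ 2 / 2))) atTop (nhds 0) := by
    have h1 : Tendsto (fun z : ℝ => -z ^ 2 / 2) atTop atBot := by
      apply Filter.Tendsto.atBot_div_const (by norm_num)
      exact tendsto_neg_atBot_iff.2 (tendsto_pow_atTop (by norm_num))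
    have := (Real.tendsto_exp_atBot.comp h1).const_mul ((√(2 * π))⁻¹)
    simpa using this.neg
  have := integral_Ioi_of_hasDerivAt_of_tendsto' hderiv hint htend
  rw [this, pdf1_eq]
  ring

lemma final_integral (σ : ℝ) (hσ : 0 < σ) :
    ∫ u : ℝ, gaussianPDFReal 0 (Real.toNNReal (σ^2)) u * gaussianPDFReal 0 1 (-u)
      = (√(2*π*σ^2))⁻¹ * (√(2*π))⁻¹ * √(π / ((1+σ^2)/(2*σ^2))) := by
  have hb : (0:ℝ) < (1+σ^2)/(2*σ^2) := by positivity
  have hcoe : ((Real.toNNReal (σ^2) : NNReal) : ℝ) = σ^2 := Real.coe_toNNReal _ (sq_nonneg σ)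
  have hptwise : ∀ u : ℝ, gaussianPDFReal 0 (Real.toNNReal (σ^2)) u * gaussianPDFReal 0 1 (-u)
      = (√(2*π*σ^2))⁻¹ * (√(2*π))⁻¹ * rexp (-((1+σ^2)/(2*σ^2)) * u^2) := by
    intro u
    simp only [gaussianPDFReal, hcoe, NNReal.coe_one, sub_zero, mul_one, neg_sq]
    rw [show ((√(2*π*σ^2))⁻¹ * rexp (-u^2/(2*σ^2))) * ((√(2*π))⁻¹ * rexp (-u^2/2))
        = (√(2*π*σ^2))⁻¹ * (√(2*π))⁻¹ * (rexp (-u^2/(2*σ^2)) * rexp (-u^2/2)) by ring,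
      ← Real.exp_add]
    congr 2
    field_simp
    ring
  rw [integral_congr_ae (Eventually.of_forall hptwise), integral_const_mul,
    integral_gaussian]

lemma value_eq (σ : ℝ) (hσ : 0 < σ) :
    2 * ((√(2*π*σ^2))⁻¹ * (√(2*π))⁻¹ * √(π / ((1+σ^2)/(2*σ^2))))
      = Real.sqrt (2/π) / Real.sqrt (1+σ^2) := by
  have hπ : (0:ℝ) < π := Real.pi_pos
  have h1 : (0:ℝ) < 2*π*σ^2 := by positivity
  have h2 : (0:ℝ) < 2*π := by positivity
  have h3 : (0:ℝ) < π / ((1+σ^2)/(2*σ^2)) := by positivity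
  have h4 : (0:ℝ) < 1+σ^2 := by positivity
  have h5 : (0:ℝ) < 2/π := by positivity
  set L := 2 * ((√(2*π*σ^2))⁻¹ * (√(2*π))⁻¹ * √(π / ((1+σ^2)/(2*σ^2)))) with hL
  set R := Real.sqrt (2/π) / Real.sqrt (1+σ^2) with hR
  have hLnn : 0 ≤ L := by rw [hL]; positivity
  have hRnn : 0 ≤ R := by rw [hR]; positivity
  have hsq : L^2 = R^2 := by
    rw [hL, hR]
    rw [mul_pow, mul_pow, mul_pow, div_pow, inv_pow, inv_pow,
      Real.sq_sqrt h1.le, Real.sq_sqrt h2.le, Real.sq_sqrt h3.le,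
      Real.sq_sqrt h5.le, Real.sq_sqrt h4.le]
    field_simp
  calc L = √(L^2) := (Real.sqrt_sq hLnn).symm
    _ = √(R^2) := by rw [hsq]
    _ = R := Real.sqrt_sq hRnn

lemma value_ge (σ : ℝ) (hσ : 0 < σ) :
    Real.sqrt (2/π) * ((1-σ^2)/(1+σ^2)) ≤ Real.sqrt (2/π) / Real.sqrt (1+σ^2) := by
  have hπ : (0:ℝ) < π := Real.pi_pos
  have h4 : (0:ℝ) < 1+σ^2 := by positivity
  have hs : (0:ℝ) < Real.sqrt (1+σ^2) := Real.sqrt_pos.mpr h4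
  have hss : Real.sqrt (1+σ^2) * Real.sqrt (1+σ^2) = 1+σ^2 := Real.mul_self_sqrt h4.le
  have hkey : (1-σ^2)/(1+σ^2) ≤ 1 / Real.sqrt (1+σ^2) := by
    rw [div_le_div_iff₀ h4 hs]
    have h1s : 1 - σ^2 ≤ Real.sqrt (1+σ^2) := by
      calc 1 - σ^2 ≤ 1 := by nlinarith [sq_nonneg σ]
        _ = Real.sqrt 1 := Real.sqrt_one.symm
        _ ≤ Real.sqrt (1+σ^2) := Real.sqrt_le_sqrt (by nlinarith [sq_nonneg σ])
    nlinarith [hs.le]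
  calc Real.sqrt (2/π) * ((1-σ^2)/(1+σ^2))
      ≤ Real.sqrt (2/π) * (1 / Real.sqrt (1+σ^2)) :=
        mul_le_mul_of_nonneg_left hkey (Real.sqrt_nonneg _)
    _ = Real.sqrt (2/π) / Real.sqrt (1+σ^2) := by ring

end RobustOneBitAux

/-- For the robust one-bit compressed sensing link function
`f(z) = 2·P(z + ε > 0) − 1` with `ε ~ N(0, σ²)`, `σ > 0`: `f` is odd, hence `μ₀ = μ₂ = 0`,
`μ₁ ≥ √(2/π)·(1−σ²)/(1+σ²)`, and for `σ² < 1/2`,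
`φ(f) = μ₁² ≥ (2/π)·((1−σ²)/(1+σ²))² > 0`. -/
theorem robust_one_bit_cs_phi_small_noise (σ : ℝ) (hσ : 0 < σ) (f : ℝ → ℝ)
    (hf : f = fun z =>
      2 * ((gaussianReal 0 (Real.toNNReal (σ ^ 2))) {u : ℝ | 0 < z + u}).toReal - 1) :
    (∀ z : ℝ, f (-z) = -f z) ∧
    gaussMoment f 0 = 0 ∧ gaussMoment f 2 = 0 ∧
    Real.sqrt (2 / Real.pi) * ((1 - σ ^ 2) / (1 + σ ^ 2)) ≤ gaussMoment f 1 ∧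
    (σ ^ 2 < 1 / 2 →
      phiFun f = gaussMoment f 1 ^ 2 ∧
      (2 / Real.pi) * ((1 - σ ^ 2) / (1 + σ ^ 2)) ^ 2 ≤ phiFun f ∧
      0 < phiFun f) := by
  open Set Filter RobustOneBitAux in
  set v : NNReal := Real.toNNReal (σ ^ 2) with hv_def
  have hv : v ≠ 0 := by
    simp only [hv_def, ne_eq, Real.toNNReal_eq_zero, not_le]
    positivity
  have h_set : ∀ z : ℝ, {u : ℝ | 0 < z + u} = Ioi (-z) := by
    intro z; ext u; simp only [mem_setOf_eq, mem_Ioi]; constructor <;> intro <;> linarith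
  set A : ℝ → ℝ := fun z => ((gaussianReal 0 v) (Ioi (-z))).toReal with hA_def
  have hfA : f = fun z => 2 * A z - 1 := by
    rw [hf]; funext z; rw [h_set z]
  have hA_mono : Monotone A := by
    intro a b hab
    exact ENNReal.toReal_mono (measure_ne_top _ _)
      (measure_mono (Ioi_subset_Ioi (neg_le_neg hab)))
  have hA_meas : Measurable A := hA_mono.measurable
  have hf_meas : Measurable f := by
    rw [hfA]; exact (hA_meas.const_mul 2).sub_const 1
  have hA0 : ∀ z, 0 ≤ A z := fun z => ENNReal.toReal_nonneg
  have hA1 : ∀ z, A z ≤ 1 := by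
    intro z
    have : ((gaussianReal 0 v) (Ioi (-z))).toReal ≤ ((gaussianReal 0 v) univ).toReal :=
      ENNReal.toReal_mono (measure_ne_top _ _) (measure_mono (subset_univ _))
    simpa using this
  have h_sym : ∀ z : ℝ, (gaussianReal 0 v) (Ioi (-z)) = (gaussianReal 0 v) (Iio z) := by
    intro z
    conv_lhs => rw [← gauss_map_neg v]
    rw [Measure.map_apply measurable_neg measurableSet_Ioi]
    congr 1
    ext x
    simp
  have h_split : ∀ z : ℝ, A (-z) + A z = 1 := by
    intro z
    have hsing : (gaussianReal 0 v) {z} = 0 :=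
      gaussianReal_absolutelyContinuous 0 hv (volume_singleton)
    have hunion : (gaussianReal 0 v) (Iio z) + (gaussianReal 0 v) (Ioi z) = 1 := by
      rw [← measure_union ((Iic_disjoint_Ioi le_rfl).mono_left Iio_subset_Iic_self)
        measurableSet_Ioi]
      rw [Iio_union_Ioi]
      rw [measure_compl (measurableSet_singleton z) (measure_ne_top _ _), hsing]
      simp
    have hAz : A (-z) = ((gaussianReal 0 v) (Ioi z)).toReal := by
      simp only [hA_def, neg_neg]
    have hAz' : A z = ((gaussianReal 0 v) (Iio z)).toReal := by
      simp only [hA_def, h_sym z]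
    rw [hAz, hAz', ← ENNReal.toReal_add (measure_ne_top _ _) (measure_ne_top _ _),
      add_comm, hunion]
    simp
  have hf_odd : ∀ z, f (-z) = -f z := by
    intro z
    rw [hfA]
    simp only
    have := h_split z
    linarith
  -- moments 0 and 2 vanish
  have hmu0 : gaussMoment f 0 = 0 := by
    unfold gaussMoment
    exact gauss_integral_odd_eq_zero 1 (by fun_prop)
      (fun x => by simp [hf_odd x])
  have hmu2 : gaussMoment f 2 = 0 := by
    unfold gaussMoment
    exact gauss_integral_odd_eq_zero 1 (by fun_prop)
      (fun x => by simp [hf_odd x])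
  -- the first moment
  set g : ℝ → ℝ → ℝ := fun z u => if 0 < z + u then z else 0 with hg_def
  have hg_meas : Measurable (Function.uncurry g) := by
    apply Measurable.ite
    · exact measurableSet_lt measurable_const (measurable_fst.add measurable_snd)
    · exact measurable_fst
    · exact measurable_const
  have h_int_id : Integrable (fun z : ℝ => z) (gaussianReal 0 1) := by
    rw [gauss_integrable_iff one_ne_zero]
    exact integrable_pdf1_mul_id
  have h_int_fst : Integrable (fun p : ℝ × ℝ => p.1)
      ((gaussianReal 0 1).prod (gaussianReal 0 v)) := by
    have hmap : Measure.map Prod.fst ((gaussianReal 0 1).prod (gaussianReal 0 v))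
        = gaussianReal 0 1 := by
      simp [Measure.map_fst_prod]
    have h' : Integrable (fun z : ℝ => z)
        (Measure.map Prod.fst ((gaussianReal 0 1).prod (gaussianReal 0 v))) := by
      rwa [hmap]
    exact (integrable_map_measure measurable_id.aestronglyMeasurable
      measurable_fst.aemeasurable).mp h'
  have h_int_g : Integrable (Function.uncurry g)
      ((gaussianReal 0 1).prod (gaussianReal 0 v)) := by
    refine Integrable.mono' h_int_fst.abs hg_meas.aestronglyMeasurable
      (Eventually.of_forall fun p => ?_)
    simp only [Function.uncurry, hg_def, Real.norm_eq_abs]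
    split
    · exact le_refl _
    · simp [abs_nonneg]
  have hzA : ∀ z, z * A z = ∫ u, g z u ∂(gaussianReal 0 v) := by
    intro z
    have hind : (fun u => g z u) = (Ioi (-z)).indicator (fun _ => z) := by
      funext u
      simp only [hg_def, indicator_apply]
      by_cases h : (0:ℝ) < z + u
      · rw [if_pos h, if_pos (by simp only [mem_Ioi]; linarith)]
      · rw [if_neg h, if_neg (by simp only [mem_Ioi]; intro hc; exact h (by linarith))]
    rw [hind, integral_indicator_const z measurableSet_Ioi]
    simp only [hA_def, smul_eq_mul]
    ring
    rfl
  have h_inner : ∀ u, ∫ z, g z u ∂(gaussianReal 0 1) = gaussianPDFReal 0 1 (-u) := by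
    intro u
    have hind : (fun z => g z u) = (Ioi (-u)).indicator (fun z => z) := by
      funext z
      simp only [hg_def, indicator_apply]
      by_cases h : (0:ℝ) < z + u
      · rw [if_pos h, if_pos (by simp only [mem_Ioi]; linarith)]
      · rw [if_neg h, if_neg (by simp only [mem_Ioi]; intro hc; exact h (by linarith))]
    rw [hind, integral_indicator measurableSet_Ioi,
      gauss_setIntegral_eq one_ne_zero _ measurableSet_Ioi, ftc_gauss]
  have h_int_zA : Integrable (fun z => z * A z) (gaussianReal 0 1) := by
    refine Integrable.mono' h_int_id.abs
      (measurable_id.mul hA_meas).aestronglyMeasurable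
      (Eventually.of_forall fun z => ?_)
    rw [Real.norm_eq_abs, abs_mul]
    calc |z| * |A z| ≤ |z| * 1 := by
          apply mul_le_mul_of_nonneg_left _ (abs_nonneg z)
          rw [abs_of_nonneg (hA0 z)]
          exact hA1 z
      _ = |z| := mul_one _
  have hT : ∫ z, z * A z ∂(gaussianReal 0 1)
      = (√(2*π*σ^2))⁻¹ * (√(2*π))⁻¹ * √(π / ((1+σ^2)/(2*σ^2))) := by
    calc ∫ z, z * A z ∂(gaussianReal 0 1)
        = ∫ z, ∫ u, g z u ∂(gaussianReal 0 v) ∂(gaussianReal 0 1) := by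
          exact integral_congr_ae (Eventually.of_forall hzA)
      _ = ∫ u, ∫ z, g z u ∂(gaussianReal 0 1) ∂(gaussianReal 0 v) :=
          integral_integral_swap h_int_g
      _ = ∫ u, gaussianPDFReal 0 1 (-u) ∂(gaussianReal 0 v) :=
          integral_congr_ae (Eventually.of_forall h_inner)
      _ = ∫ u, gaussianPDFReal 0 v u * gaussianPDFReal 0 1 (-u) :=
          gauss_integral_eq hv _
      _ = (√(2*π*σ^2))⁻¹ * (√(2*π))⁻¹ * √(π / ((1+σ^2)/(2*σ^2))) := by
          rw [← hv_def] at *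
          exact final_integral σ hσ
  have hmu1 : gaussMoment f 1 = Real.sqrt (2/π) / Real.sqrt (1+σ^2) := by
    unfold gaussMoment
    have hfz : ∀ z : ℝ, f z * z ^ 1 = 2 * (z * A z) - z := by
      intro z; rw [hfA]; ring
    rw [integral_congr_ae (Eventually.of_forall hfz)]
    have hz0 : ∫ a : ℝ, a ∂(gaussianReal 0 1) = 0 :=
      gauss_integral_odd_eq_zero 1 (g := fun x => x) (by fun_prop) (fun x => rfl)
    rw [integral_sub (h_int_zA.const_mul 2) h_int_id, integral_const_mul, hz0, hT, sub_zero]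
    exact value_eq σ hσ
  have hmu1_ge : Real.sqrt (2 / Real.pi) * ((1 - σ ^ 2) / (1 + σ ^ 2)) ≤ gaussMoment f 1 := by
    rw [hmu1]
    exact value_ge σ hσ
  refine ⟨hf_odd, hmu0, hmu2, hmu1_ge, fun hσ2 => ?_⟩
  have hphi : phiFun f = gaussMoment f 1 ^ 2 := by
    unfold phiFun
    rw [hmu0, hmu2]
    ring
  have hbd_pos : 0 < Real.sqrt (2 / Real.pi) * ((1 - σ ^ 2) / (1 + σ ^ 2)) := by
    have hπ : (0:ℝ) < π := Real.pi_pos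
    apply mul_pos (Real.sqrt_pos.mpr (by positivity))
    apply div_pos (by linarith) (by positivity)
  have hbound : (2 / Real.pi) * ((1 - σ ^ 2) / (1 + σ ^ 2)) ^ 2 ≤ phiFun f := by
    rw [hphi]
    have h1 : (Real.sqrt (2 / Real.pi) * ((1 - σ ^ 2) / (1 + σ ^ 2))) ^ 2
        = (2 / Real.pi) * ((1 - σ ^ 2) / (1 + σ ^ 2)) ^ 2 := by
      rw [mul_pow, Real.sq_sqrt (by positivity : (0:ℝ) ≤ 2 / Real.pi)]
    rw [← h1]
    exact pow_le_pow_left₀ hbd_pos.le hmu1_ge 2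
  refine ⟨hphi, hbound, lt_of_lt_of_le ?_ hbound⟩
  have hπ : (0:ℝ) < π := Real.pi_pos
  apply mul_pos (by positivity)
  apply pow_pos (div_pos (by linarith) (by positivity))
end

section
/- Consider the one-bit phase retrieval link function f(z) = sign(|z| − θ) for a threshold θ > 0, and let θ_m be the median of |Z| for Z ~ N(0,1), i.e., P(|Z| ≥ θ_m) = 1/2. Then sign(φ(f)) = sign(θ − θ_m), and there exists an absolute constant C > 0 such that |φ(f)| ≥ C·θ·|θ − θ_m|·e^{−θ²}. In particular φ(f) > 0 for θ > θ_m and φ(f) < 0 for 0 < θ < θ_m. -/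
open MeasureTheory ProbabilityTheory Real

open Set Filter Topology
open scoped NNReal ENNReal

noncomputable def gp (x : ℝ) : ℝ := (Real.sqrt (2 * Real.pi))⁻¹ * Real.exp (-x ^ 2 / 2)

lemma gp_pos (x : ℝ) : 0 < gp x := by
  unfold gp
  have h : 0 < Real.sqrt (2 * Real.pi) := Real.sqrt_pos.mpr (by positivity)
  positivity

lemma gp_even (x : ℝ) : gp (-x) = gp x := by simp [gp]

lemma gp_eq : gaussianPDFReal 0 1 = gp := by
  funext x
  simp [gaussianPDFReal, gp]

lemma gp_continuous : Continuous gp := by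
  unfold gp; fun_prop

lemma integrable_gp : Integrable gp := by
  have h : Integrable (fun x : ℝ => (Real.sqrt (2 * Real.pi))⁻¹ * Real.exp (-(1/2) * x ^ 2)) :=
    (integrable_exp_neg_mul_sq (by norm_num)).const_mul _
  refine h.congr (Eventually.of_forall fun x => ?_)
  unfold gp
  norm_num [neg_div, div_eq_mul_inv, mul_comm]

lemma integral_gp : ∫ x, gp x = 1 := by
  rw [← gp_eq]; exact integral_gaussianPDFReal_eq_one 0 one_ne_zero

lemma integrable_id_gp : Integrable (fun x => x * gp x) := by
  have h : Integrable (fun x : ℝ => (Real.sqrt (2 * Real.pi))⁻¹ * (x * Real.exp (-(1/2) * x ^ 2))) :=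
    ((integrable_mul_exp_neg_mul_sq (by norm_num)).const_mul _)
  refine h.congr (Eventually.of_forall fun x => ?_)
  unfold gp
  norm_num [neg_div, div_eq_mul_inv, mul_comm]
  ring

lemma integrable_sq_gp : Integrable (fun x => x ^ 2 * gp x) := by
  have hmaj : Integrable (fun x : ℝ => 4 * (Real.sqrt (2 * Real.pi))⁻¹ * Real.exp (-(1/4) * x ^ 2)) :=
    (integrable_exp_neg_mul_sq (by norm_num)).const_mul _
  refine hmaj.mono ((continuous_pow 2).mul gp_continuous).aestronglyMeasurable
    (Eventually.of_forall fun x => ?_)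
  have h1 : x ^ 2 / 4 ≤ Real.exp (x ^ 2 / 4) := (Real.add_one_le_exp _).trans' (by linarith)
  have h2 : x ^ 2 ≤ 4 * Real.exp (x ^ 2 / 4) := by linarith
  have hc : (0:ℝ) < Real.sqrt (2 * Real.pi) := Real.sqrt_pos.mpr (by positivity)
  unfold gp
  rw [Real.norm_eq_abs, Real.norm_eq_abs, abs_of_nonneg (by positivity), abs_of_pos (by positivity)]
  calc x ^ 2 * ((Real.sqrt (2 * Real.pi))⁻¹ * Real.exp (-x ^ 2 / 2))
      ≤ 4 * Real.exp (x ^ 2 / 4) * ((Real.sqrt (2 * Real.pi))⁻¹ * Real.exp (-x ^ 2 / 2)) := by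
        apply mul_le_mul_of_nonneg_right h2 (by positivity)
    _ = 4 * (Real.sqrt (2 * Real.pi))⁻¹ * Real.exp (-(1/4) * x ^ 2) := by
        rw [show (-(1/4) * x ^ 2 : ℝ) = x ^ 2 / 4 + -x ^ 2 / 2 by ring, Real.exp_add]; ring


lemma integral_gauss_eq (f : ℝ → ℝ) :
    ∫ z, f z ∂(gaussianReal 0 1) = ∫ z, f z * gp z := by
  rw [gaussianReal_of_var_ne_zero 0 one_ne_zero]
  have hpdf : gaussianPDF 0 1 = fun x => ((Real.toNNReal (gp x) : ℝ≥0) : ℝ≥0∞) := by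
    funext x; rw [gaussianPDF, gp_eq]; rfl
  have hmeas : Measurable fun x => Real.toNNReal (gp x) :=
    measurable_real_toNNReal.comp gp_continuous.measurable
  rw [hpdf, integral_withDensity_eq_integral_smul hmeas f]
  congr 1; funext x
  simp [NNReal.smul_def, Real.coe_toNNReal _ (gp_pos x).le, mul_comm]

lemma ae_ne_abs (θ : ℝ) : ∀ᵐ z : ℝ, z ≠ θ ∧ z ≠ -θ := by
  have h : (volume : Measure ℝ) ({θ, -θ} : Set ℝ) = 0 :=
    Set.Finite.measure_zero (by simp) _
  have := measure_eq_zero_iff_ae_notMem.mp h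
  filter_upwards [this] with z hz
  simp only [Set.mem_insert_iff, Set.mem_singleton_iff, not_or] at hz
  exact hz

lemma sign_split (θ : ℝ) (hθ : 0 < θ) (g : ℝ → ℝ)
    (hg : Integrable (fun z => g z * gp z)) :
    ∫ z, Real.sign (|z| - θ) * (g z * gp z)
      = 2 * (∫ x in Iio (-θ) ∪ Ioi θ, g x * gp x) - ∫ x, g x * gp x := by
  set S : Set ℝ := Iio (-θ) ∪ Ioi θ with hSdef
  have hS : MeasurableSet S := (measurableSet_Iio).union measurableSet_Ioi
  have hae : ∀ᵐ z : ℝ, Real.sign (|z| - θ) * (g z * gp z)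
      = S.indicator (fun x => 2 * (g x * gp x)) z - g z * gp z := by
    filter_upwards [ae_ne_abs θ] with z hz
    rcases lt_trichotomy (|z|) θ with h | h | h
    · have hzS : z ∉ S := by
        rcases abs_lt.mp h with ⟨h1, h2⟩
        simp only [hSdef, Set.mem_union, Set.mem_Iio, Set.mem_Ioi, not_or, not_lt]
        exact ⟨h1.le, h2.le⟩
      rw [Real.sign_of_neg (by linarith), Set.indicator_of_notMem hzS]
      ring
    · exact absurd h (by rcases abs_eq hθ.le |>.mp h with h | h <;> simp [h] at hz <;> tauto)
    · have hzS : z ∈ S := by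
        rcases lt_abs.mp h with h1 | h1
        · exact Set.mem_union_right _ (Set.mem_Ioi.mpr h1)
        · exact Set.mem_union_left _ (Set.mem_Iio.mpr (by linarith))
      rw [Real.sign_of_pos (by linarith), Set.indicator_of_mem hzS]
      ring
  rw [integral_congr_ae hae, integral_sub ((hg.const_mul 2).indicator hS) hg,
    integral_indicator hS, integral_const_mul]


lemma union_split (θ : ℝ) (hθ : 0 < θ) (g : ℝ → ℝ)
    (hg : Integrable (fun z => g z * gp z)) :
    ∫ x in Iio (-θ) ∪ Ioi θ, g x * gp x
      = (∫ x in Ioi θ, g (-x) * gp x) + ∫ x in Ioi θ, g x * gp x := by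
  have hdisj : Disjoint (Iio (-θ)) (Ioi θ) := by
    apply Set.disjoint_left.mpr
    intro x hx1 hx2
    simp only [Set.mem_Iio] at hx1
    simp only [Set.mem_Ioi] at hx2
    linarith
  rw [setIntegral_union hdisj measurableSet_Ioi hg.integrableOn hg.integrableOn]
  congr 1
  rw [← integral_Iic_eq_integral_Iio, ← integral_comp_neg_Ioi]
  congr 1; funext x; rw [gp_even]

noncomputable def Ig (a : ℝ) : ℝ := ∫ x in Ioi a, gp x

lemma integrable_sq_sub_gp : Integrable (fun x => (x ^ 2 - 1) * gp x) := by
  have h := integrable_sq_gp.sub integrable_gp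
  refine h.congr (Eventually.of_forall fun x => ?_)
  simp only [Pi.sub_apply]
  ring

lemma hasDerivAt_F (x : ℝ) : HasDerivAt (fun y => -(y * gp y)) ((x ^ 2 - 1) * gp x) x := by
  have h1 : HasDerivAt (fun y : ℝ => -y ^ 2 / 2) (-x) x := by
    have := ((hasDerivAt_pow 2 x).neg).div_const 2
    refine this.congr_deriv ?_
    push_cast
    ring
  have h2 : HasDerivAt (fun y : ℝ => Real.exp (-y ^ 2 / 2)) (Real.exp (-x ^ 2 / 2) * (-x)) x :=
    (h1.exp)
  have h3 : HasDerivAt (fun y : ℝ => y * ((Real.sqrt (2 * Real.pi))⁻¹ * Real.exp (-y ^ 2 / 2)))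
      (1 * ((Real.sqrt (2 * Real.pi))⁻¹ * Real.exp (-x ^ 2 / 2)) +
        x * ((Real.sqrt (2 * Real.pi))⁻¹ * (Real.exp (-x ^ 2 / 2) * (-x)))) x :=
    (hasDerivAt_id x).mul ((h2.const_mul _))
  have h4 := h3.neg
  refine h4.congr_deriv ?_
  unfold gp; ring

lemma tendsto_F : Tendsto (fun y : ℝ => -(y * gp y)) atTop (𝓝 0) := by
  have h0 : Tendsto (fun y : ℝ => Real.exp (-(1/2) * y)) atTop (𝓝 0) := by
    have : Tendsto (fun y : ℝ => -(1/2) * y) atTop atBot :=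
      Tendsto.const_mul_atTop_of_neg (by norm_num) tendsto_id
    exact Real.tendsto_exp_atBot.comp this
  have hlo := rpow_mul_exp_neg_mul_sq_isLittleO_exp_neg (b := 1/2) (by norm_num) 1
  have heq : (fun y : ℝ => y * gp y) =ᶠ[atTop]
      fun y => (Real.sqrt (2 * Real.pi))⁻¹ * (y ^ (1:ℝ) * Real.exp (-(1/2) * y ^ 2)) := by
    filter_upwards [eventually_ge_atTop (0:ℝ)] with y hy
    rw [Real.rpow_one]
    unfold gp
    ring_nf
  have h1 : Tendsto (fun y : ℝ => y ^ (1:ℝ) * Real.exp (-(1/2) * y ^ 2)) atTop (𝓝 0) :=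
    hlo.isBigO.trans_tendsto h0
  have h2 : Tendsto (fun y : ℝ => y * gp y) atTop (𝓝 0) := by
    rw [tendsto_congr' heq]
    simpa using (h1.const_mul ((Real.sqrt (2 * Real.pi))⁻¹))
  simpa using h2.neg

lemma tail_eq (a : ℝ) : ∫ x in Ioi a, (x ^ 2 - 1) * gp x = a * gp a := by
  have h := integral_Ioi_of_hasDerivAt_of_tendsto' (f := fun y => -(y * gp y))
    (f' := fun x => (x ^ 2 - 1) * gp x) (a := a)
    (fun x _ => hasDerivAt_F x) integrable_sq_sub_gp.integrableOn tendsto_F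
  rw [h]; ring

lemma integral_sq_gp : ∫ x, x ^ 2 * gp x = 1 := by
  have heven : ∫ x in Iio (0:ℝ), (x ^ 2 - 1) * gp x = ∫ x in Ioi (0:ℝ), (x ^ 2 - 1) * gp x := by
    have hc := integral_comp_neg_Ioi (0:ℝ) (fun x => (x ^ 2 - 1) * gp x)
    rw [neg_zero] at hc
    rw [← integral_Iic_eq_integral_Iio, ← hc]
    congr 1; funext x; rw [gp_even]; ring_nf
  have hsplit : ∫ x, (x ^ 2 - 1) * gp x
      = (∫ x in Iio (0:ℝ), (x ^ 2 - 1) * gp x) + ∫ x in Ioi (0:ℝ), (x ^ 2 - 1) * gp x := by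
    have := integral_add_compl (measurableSet_Ioi (a := (0:ℝ))) integrable_sq_sub_gp
    rw [← this, compl_Ioi, integral_Iic_eq_integral_Iio, add_comm]
  have h0 : ∫ x in Ioi (0:ℝ), (x ^ 2 - 1) * gp x = 0 := by
    rw [tail_eq]; ring
  have : ∫ x, (x ^ 2 - 1) * gp x = 0 := by rw [hsplit, heven, h0]; ring
  have hsub : ∫ x, (x ^ 2 - 1) * gp x = (∫ x, x ^ 2 * gp x) - ∫ x, gp x := by
    rw [← integral_sub integrable_sq_gp integrable_gp]
    congr 1; funext x; ring
  rw [hsub, integral_gp] at this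
  linarith

lemma integral_id_gp : ∫ x, x * gp x = 0 := by
  have h : ∫ x, -x * gp (-x) = ∫ x, x * gp x := by
    rw [show (fun x : ℝ => -x * gp (-x)) = fun x => (fun y => y * gp y) (-x) by funext x; simp]
    exact integral_neg_eq_self (fun y => y * gp y) volume
  have h2 : ∫ x, -x * gp (-x) = -∫ x, x * gp x := by
    have : (fun x : ℝ => -x * gp (-x)) = fun x => -(x * gp x) := by
      funext x; rw [gp_even]; ring
    rw [this, integral_neg]
  linarith [h.symm.trans h2]

noncomputable def Jg (a : ℝ) : ℝ := ∫ x in Ioi a, x ^ 2 * gp x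

lemma m0_eq (θ : ℝ) (hθ : 0 < θ) :
    gaussMoment (fun z => Real.sign (|z| - θ)) 0 = 4 * Ig θ - 1 := by
  have hg : Integrable (fun z : ℝ => (1:ℝ) * gp z) := by
    simpa using integrable_gp
  have h := sign_split θ hθ (fun _ => 1) hg
  have h2 := union_split θ hθ (fun _ => 1) hg
  unfold gaussMoment
  rw [integral_gauss_eq]
  simp only [pow_zero, mul_one, one_mul] at h h2 ⊢
  rw [h, h2, integral_gp]
  unfold Ig; ring

lemma m1_eq (θ : ℝ) (hθ : 0 < θ) :
    gaussMoment (fun z => Real.sign (|z| - θ)) 1 = 0 := by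
  have hg : Integrable (fun z : ℝ => z * gp z) := integrable_id_gp
  have h := sign_split θ hθ (fun z => z) hg
  have h2 := union_split θ hθ (fun z => z) hg
  unfold gaussMoment
  rw [integral_gauss_eq]
  simp only [pow_one, mul_assoc] at h ⊢
  rw [h, h2, integral_id_gp]
  have hneg : ∫ x in Ioi θ, -x * gp x = -∫ x in Ioi θ, x * gp x := by
    rw [← integral_neg]; congr 1; funext x; ring
  rw [hneg]; ring

lemma m2_eq (θ : ℝ) (hθ : 0 < θ) :
    gaussMoment (fun z => Real.sign (|z| - θ)) 2 = 4 * Jg θ - 1 := by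
  have hg : Integrable (fun z : ℝ => z ^ 2 * gp z) := integrable_sq_gp
  have h := sign_split θ hθ (fun z => z ^ 2) hg
  have h2 := union_split θ hθ (fun z => z ^ 2) hg
  unfold gaussMoment
  rw [integral_gauss_eq]
  simp only [mul_assoc] at h ⊢
  rw [h, h2, integral_sq_gp]
  have hsq : ∫ x in Ioi θ, (-x) ^ 2 * gp x = ∫ x in Ioi θ, x ^ 2 * gp x := by
    congr 1; funext x; ring
  rw [hsq]
  unfold Jg; ring

lemma J_sub_I (θ : ℝ) : Jg θ - Ig θ = θ * gp θ := by
  rw [← tail_eq θ]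
  unfold Jg Ig
  rw [← integral_sub integrable_sq_gp.integrableOn integrable_gp.integrableOn]
  congr 1; funext x; ring

lemma phi_eq (θ : ℝ) (hθ : 0 < θ) :
    phiFun (fun z => Real.sign (|z| - θ)) = 4 * θ * gp θ * (1 - 4 * Ig θ) := by
  unfold phiFun
  have hJ : Jg θ = Ig θ + θ * gp θ := by linarith [J_sub_I θ]
  rw [m0_eq θ hθ, m1_eq θ hθ, m2_eq θ hθ, hJ]
  ring

lemma Ig_sub (a b : ℝ) (hab : a ≤ b) : Ig a - Ig b = ∫ x in Ioc a b, gp x := by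
  unfold Ig
  rw [← Ioc_union_Ioi_eq_Ioi hab,
    setIntegral_union Ioc_disjoint_Ioi_same measurableSet_Ioi
      integrable_gp.integrableOn integrable_gp.integrableOn]
  ring

lemma Ioc_lb (a b : ℝ) (h0 : 0 ≤ a) (hab : a ≤ b) :
    (b - a) * gp b ≤ ∫ x in Ioc a b, gp x := by
  have hconst : ∫ _x in Ioc a b, gp b = (b - a) * gp b := by
    rw [setIntegral_const, measureReal_def, Real.volume_Ioc, ENNReal.toReal_ofReal (by linarith), smul_eq_mul]
  rw [← hconst]
  refine setIntegral_mono_on (integrableOn_const ?_)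
    integrable_gp.integrableOn measurableSet_Ioc (fun x hx => ?_)
  · rw [Real.volume_Ioc]; exact ENNReal.ofReal_ne_top
  · have hx1 : 0 < x := lt_of_le_of_lt h0 hx.1
    have hx2 : x ≤ b := hx.2
    have : x ^ 2 ≤ b ^ 2 := pow_le_pow_left₀ hx1.le hx2 2
    unfold gp
    have hc : (0:ℝ) ≤ (Real.sqrt (2 * Real.pi))⁻¹ := by positivity
    exact mul_le_mul_of_nonneg_left (Real.exp_le_exp.mpr (by linarith)) hc

lemma Ig_nonneg (a : ℝ) : 0 ≤ Ig a :=
  setIntegral_nonneg measurableSet_Ioi (fun x _ => (gp_pos x).le)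

lemma median_I (θm : ℝ) (hθm : 0 < θm)
    (hmed : (gaussianReal 0 1) {z : ℝ | θm ≤ |z|} = 1 / 2) : Ig θm = 1 / 4 := by
  have hset : {z : ℝ | θm ≤ |z|} = Iic (-θm) ∪ Ici θm := by
    ext z
    simp only [Set.mem_setOf_eq, Set.mem_union, Set.mem_Iic, Set.mem_Ici, le_abs]
    constructor
    · rintro (h | h)
      · exact Or.inr h
      · exact Or.inl (by linarith)
    · rintro (h | h)
      · exact Or.inr (by linarith)
      · exact Or.inl h
  rw [gaussianReal_apply_eq_integral 0 one_ne_zero, gp_eq, hset] at hmed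
  have hdisj : Disjoint (Iic (-θm)) (Ici θm) := by
    apply Set.disjoint_left.mpr
    intro x hx1 hx2
    simp only [Set.mem_Iic] at hx1
    simp only [Set.mem_Ici] at hx2
    linarith
  rw [setIntegral_union hdisj measurableSet_Ici
    integrable_gp.integrableOn integrable_gp.integrableOn] at hmed
  have h1 : ∫ x in Iic (-θm), gp x = Ig θm := by
    rw [← integral_comp_neg_Ioi]
    unfold Ig
    congr 1; funext x; rw [gp_even]
  have h2 : ∫ x in Ici θm, gp x = Ig θm := by
    rw [integral_Ici_eq_integral_Ioi]; rfl
  rw [h1, h2] at hmed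
  have htr := congrArg ENNReal.toReal hmed
  rw [ENNReal.toReal_ofReal (by linarith [Ig_nonneg θm])] at htr
  have : (1 / 2 : ℝ≥0∞).toReal = 1 / 2 := by norm_num
  rw [this] at htr
  linarith

/-- For the one-bit phase retrieval link function `f(z) = sign(|z| − θ)`, `θ > 0`,
with `θ_m` the median of `|Z|`, `Z ~ N(0,1)` (i.e. `P(|Z| ≥ θ_m) = 1/2`):
`sign(φ(f)) = sign(θ − θ_m)`, there is an absolute constant `C > 0` with
`|φ(f)| ≥ C·θ·|θ − θ_m|·e^{−θ²}`; in particular `φ(f) > 0` for `θ > θ_m` and `φ(f) < 0`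
for `0 < θ < θ_m`. -/
theorem one_bit_phase_retrieval_phi (θm : ℝ) (hθm : 0 < θm)
    (hmed : (gaussianReal 0 1) {z : ℝ | θm ≤ |z|} = 1 / 2) :
    ∃ C : ℝ, 0 < C ∧ ∀ θ : ℝ, 0 < θ →
      Real.sign (phiFun fun z => Real.sign (|z| - θ)) = Real.sign (θ - θm) ∧
      C * θ * |θ - θm| * Real.exp (-θ ^ 2)
          ≤ |phiFun fun z => Real.sign (|z| - θ)| ∧
      (θm < θ → 0 < phiFun fun z => Real.sign (|z| - θ)) ∧
      (θ < θm → phiFun (fun z => Real.sign (|z| - θ)) < 0) := by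
  have hIgm := median_I θm hθm hmed
  have hc : (0:ℝ) < (Real.sqrt (2 * Real.pi))⁻¹ := by
    have h0 : (0:ℝ) < Real.sqrt (2 * Real.pi) := Real.sqrt_pos.mpr (by positivity)
    positivity
  refine ⟨16 * ((Real.sqrt (2 * Real.pi))⁻¹) ^ 2 * Real.exp (-θm ^ 2 / 2),
    by positivity, fun θ hθ => ?_⟩
  have hphi : phiFun (fun z => Real.sign (|z| - θ)) = 16 * θ * gp θ * (Ig θm - Ig θ) := by
    rw [phi_eq θ hθ, hIgm]; ring
  have hgpθ : 0 < gp θ := gp_pos θ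
  rcases lt_trichotomy θ θm with hlt | heq | hgt
  · -- θ < θm : φ < 0
    have hD : (θm - θ) * gp θm ≤ Ig θ - Ig θm := by
      rw [Ig_sub θ θm hlt.le]
      exact Ioc_lb θ θm hθ.le hlt.le
    have hDpos : 0 < Ig θ - Ig θm :=
      lt_of_lt_of_le (mul_pos (by linarith) (gp_pos θm)) hD
    have h16 : 0 < 16 * θ * gp θ := by
      have := gp_pos θ; nlinarith
    have hφneg : phiFun (fun z => Real.sign (|z| - θ)) < 0 := by
      rw [hphi]; nlinarith [mul_pos h16 hDpos]
    refine ⟨?_, ?_, fun h => absurd h (by linarith), fun _ => hφneg⟩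
    · rw [Real.sign_of_neg hφneg, Real.sign_of_neg (by linarith : θ - θm < 0)]
    · rw [abs_of_neg hφneg, abs_of_neg (by linarith : θ - θm < 0), hphi]
      have hkey : Real.exp (-θm ^ 2 / 2) * Real.exp (-θ ^ 2)
          ≤ Real.exp (-θ ^ 2 / 2) * Real.exp (-θm ^ 2 / 2) := by
        rw [← Real.exp_add, ← Real.exp_add]
        exact Real.exp_le_exp.mpr (by nlinarith [sq_nonneg θ])
      have h2 : 16 * θ * gp θ * ((θm - θ) * gp θm)
          = (16 * θ * (θm - θ)) * (Real.exp (-θ ^ 2 / 2) * Real.exp (-θm ^ 2 / 2)) * ((Real.sqrt (2 * Real.pi))⁻¹) ^ 2 := by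
        unfold gp; ring
      have h3 : (16 * θ * (θm - θ)) * (Real.exp (-θm ^ 2 / 2) * Real.exp (-θ ^ 2))
          ≤ (16 * θ * (θm - θ)) * (Real.exp (-θ ^ 2 / 2) * Real.exp (-θm ^ 2 / 2)) :=
        mul_le_mul_of_nonneg_left hkey (by nlinarith)
      have h4 : 16 * θ * gp θ * ((θm - θ) * gp θm) ≤ 16 * θ * gp θ * (Ig θ - Ig θm) :=
        mul_le_mul_of_nonneg_left hD (by nlinarith [gp_pos θ])
      calc 16 * ((Real.sqrt (2 * Real.pi))⁻¹) ^ 2 * Real.exp (-θm ^ 2 / 2) * θ * (-(θ - θm)) * Real.exp (-θ ^ 2)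
          = (16 * θ * (θm - θ)) * (Real.exp (-θm ^ 2 / 2) * Real.exp (-θ ^ 2)) * ((Real.sqrt (2 * Real.pi))⁻¹) ^ 2 := by ring
        _ ≤ (16 * θ * (θm - θ)) * (Real.exp (-θ ^ 2 / 2) * Real.exp (-θm ^ 2 / 2)) * ((Real.sqrt (2 * Real.pi))⁻¹) ^ 2 := by
            apply mul_le_mul_of_nonneg_right h3 (by positivity)
        _ = 16 * θ * gp θ * ((θm - θ) * gp θm) := h2.symm
        _ ≤ 16 * θ * gp θ * (Ig θ - Ig θm) := h4
        _ = -(16 * θ * gp θ * (Ig θm - Ig θ)) := by ring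
  · -- θ = θm
    have hD0 : Ig θm - Ig θ = 0 := by rw [heq]; ring
    have hφ0 : phiFun (fun z => Real.sign (|z| - θ)) = 0 := by rw [hphi, hD0]; ring
    refine ⟨?_, ?_, fun h => absurd h (by linarith), fun h => absurd h (by linarith)⟩
    · rw [hφ0, heq, sub_self, Real.sign_zero]
    · rw [hφ0, heq]
      simp
  · -- θm < θ : φ > 0
    have hD : (θ - θm) * gp θ ≤ Ig θm - Ig θ := by
      rw [Ig_sub θm θ hgt.le]
      exact Ioc_lb θm θ hθm.le hgt.le
    have hDpos : 0 < Ig θm - Ig θ :=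
      lt_of_lt_of_le (mul_pos (by linarith) (gp_pos θ)) hD
    have h16 : 0 < 16 * θ * gp θ := by
      have := gp_pos θ; nlinarith
    have hφpos : 0 < phiFun (fun z => Real.sign (|z| - θ)) := by
      rw [hphi]; exact mul_pos h16 hDpos
    refine ⟨?_, ?_, fun _ => hφpos, fun h => absurd h (by linarith)⟩
    · rw [Real.sign_of_pos hφpos, Real.sign_of_pos (by linarith : 0 < θ - θm)]
    · rw [abs_of_pos hφpos, abs_of_pos (by linarith : (0:ℝ) < θ - θm), hphi]
      have hkey : Real.exp (-θm ^ 2 / 2) * Real.exp (-θ ^ 2)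
          ≤ Real.exp (-θ ^ 2 / 2) * Real.exp (-θ ^ 2 / 2) := by
        rw [← Real.exp_add, ← Real.exp_add]
        exact Real.exp_le_exp.mpr (by nlinarith [sq_nonneg θm])
      have h4 : 16 * θ * gp θ * ((θ - θm) * gp θ) ≤ 16 * θ * gp θ * (Ig θm - Ig θ) :=
        mul_le_mul_of_nonneg_left hD (by nlinarith [gp_pos θ])
      calc 16 * ((Real.sqrt (2 * Real.pi))⁻¹) ^ 2 * Real.exp (-θm ^ 2 / 2) * θ * (θ - θm) * Real.exp (-θ ^ 2)
          = (16 * θ * (θ - θm)) * (Real.exp (-θm ^ 2 / 2) * Real.exp (-θ ^ 2)) * ((Real.sqrt (2 * Real.pi))⁻¹) ^ 2 := by ring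
        _ ≤ (16 * θ * (θ - θm)) * (Real.exp (-θ ^ 2 / 2) * Real.exp (-θ ^ 2 / 2)) * ((Real.sqrt (2 * Real.pi))⁻¹) ^ 2 := by
            apply mul_le_mul_of_nonneg_right (mul_le_mul_of_nonneg_left hkey (by nlinarith)) (by positivity)
        _ = 16 * θ * gp θ * ((θ - θm) * gp θ) := by unfold gp; ring
        _ ≤ 16 * θ * gp θ * (Ig θm - Ig θ) := h4
end

section
/- Consider the one-bit phase retrieval link function f(z) = sign(|z| − θ) for a threshold θ > 0, and let Z ~ N(0,1) and p₁ = P(|Z| ≥ θ). Then μ₁ = 0, φ(f) = μ₀(μ₀ − μ₂), and the exact formula φ(f) = −2(2p₁ − 1)·(2θ/√(2π))·e^{−θ²/2} holds. -/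
open MeasureTheory ProbabilityTheory Real

open Set Filter Topology
open scoped NNReal ENNReal


lemma aux_transfer (h : ℝ → ℝ) :
    ∫ z, h z ∂(gaussianReal 0 1) = ∫ z, gaussianPDFReal 0 1 z * h z := by
  rw [gaussianReal_of_var_ne_zero 0 one_ne_zero]
  have e : (gaussianPDF 0 1) = fun x => ((gaussianPDFReal 0 1 x).toNNReal : ℝ≥0∞) := rfl
  rw [e, integral_withDensity_eq_integral_smul
      ((measurable_gaussianPDFReal 0 1).real_toNNReal) h]
  congr 1; ext z
  simp [NNReal.smul_def, Real.coe_toNNReal _ (gaussianPDFReal_nonneg 0 1 z)]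

lemma pdf01 (z : ℝ) : gaussianPDFReal 0 1 z = (Real.sqrt (2*π))⁻¹ * Real.exp (-z^2/2) := by
  simp [gaussianPDFReal]

lemma intE : Integrable fun z : ℝ => exp (-z^2/2) := by
  have : (fun z : ℝ => exp (-z^2/2)) = fun z => exp (-(1/2) * z^2) := by ext z; ring_nf
  rw [this]; exact integrable_exp_neg_mul_sq (by norm_num)

lemma intE1 : Integrable fun z : ℝ => z * exp (-z^2/2) := by
  have : (fun z : ℝ => z * exp (-z^2/2)) = fun z => z * exp (-(1/2) * z^2) := by ext z; ring_nf
  rw [this]; exact integrable_mul_exp_neg_mul_sq (by norm_num)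

lemma intE2 : Integrable fun z : ℝ => z^2 * exp (-z^2/2) := by
  have : (fun z : ℝ => z^2 * exp (-z^2/2)) = fun z => z ^ (2:ℝ) * exp (-(1/2) * z^2) := by
    ext z; rw [Real.rpow_two]; ring_nf
  rw [this]; exact integrable_rpow_mul_exp_neg_mul_sq (by norm_num) (by norm_num)

lemma hasDerivF (z : ℝ) :
    HasDerivAt (fun z : ℝ => z * exp (-z^2/2)) ((1 - z^2) * exp (-z^2/2)) z := by
  have h1 : HasDerivAt (fun z : ℝ => -z^2/2) (-z) z := by
    have := ((hasDerivAt_pow 2 z).neg.div_const 2)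
    refine this.congr_deriv ?_; push_cast; ring
  have h3 := (hasDerivAt_id z).mul h1.exp
  refine h3.congr_deriv ?_; simp; ring

lemma tendstoF_top : Tendsto (fun z : ℝ => z * exp (-z^2/2)) atTop (𝓝 0) := by
  have h := (rpow_mul_exp_neg_mul_sq_isLittleO_exp_neg (by norm_num : (0:ℝ) < 1/2) 1)
  have h0 : Tendsto (fun x : ℝ => exp (-(1/2) * x)) atTop (𝓝 0) := by
    apply Real.tendsto_exp_atBot.comp
    exact Tendsto.const_mul_atTop_of_neg (by norm_num) tendsto_id
  refine (h.tendsto_zero_of_tendsto h0).congr' ?_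
  filter_upwards [eventually_gt_atTop (0:ℝ)] with x hx
  rw [Real.rpow_one]; ring_nf

lemma tendstoF_bot : Tendsto (fun z : ℝ => z * exp (-z^2/2)) atBot (𝓝 0) := by
  have h := tendstoF_top.comp tendsto_neg_atBot_atTop
  have e : (fun z : ℝ => z * exp (-z^2/2)) = fun z => -((-z) * exp (-(-z)^2/2)) := by
    ext z; ring_nf
  rw [e]; simpa using h.neg

lemma integral_one_sub_sq : (∫ z : ℝ, (1 - z^2) * exp (-z^2/2)) = 0 := by
  have := integral_of_hasDerivAt_of_tendsto hasDerivF (by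
    have e : (fun z : ℝ => (1 - z^2) * exp (-z^2/2))
        = fun z => exp (-z^2/2) - z^2 * exp (-z^2/2) := by ext z; ring
    rw [e]; exact intE.sub intE2) tendstoF_bot tendstoF_top
  simpa using this

lemma integral_E : (∫ z : ℝ, exp (-z^2/2)) = Real.sqrt (2*π) := by
  have e : (fun z : ℝ => exp (-z^2/2)) = fun z => exp (-(1/2) * z^2) := by ext z; ring_nf
  rw [e, integral_gaussian]
  rw [show π / (1/2) = 2 * π by ring]

lemma integral_sq_E : (∫ z : ℝ, z^2 * exp (-z^2/2)) = Real.sqrt (2*π) := by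
  have h := integral_one_sub_sq
  have e : (fun z : ℝ => (1 - z^2) * exp (-z^2/2))
      = fun z => exp (-z^2/2) - z^2 * exp (-z^2/2) := by ext z; ring
  rw [e, integral_sub intE intE2, integral_E] at h
  linarith

lemma integral_Ioo_one_sub_sq (θ : ℝ) (hθ : 0 < θ) :
    (∫ z in Ioo (-θ) θ, (1 - z^2) * exp (-z^2/2)) = 2 * θ * exp (-θ^2/2) := by
  have hle : -θ ≤ θ := by linarith
  have hcont : Continuous fun z : ℝ => (1 - z^2) * exp (-z^2/2) := by continuity
  have h := intervalIntegral.integral_eq_sub_of_hasDerivAt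
    (f := fun z : ℝ => z * exp (-z^2/2)) (a := -θ) (b := θ)
    (fun x _ => hasDerivF x) (hcont.intervalIntegrable _ _)
  rw [intervalIntegral.integral_of_le hle, integral_Ioc_eq_integral_Ioo] at h
  rw [h]; rw [show (-θ:ℝ)^2 = θ^2 by ring]; ring

lemma sign_eq_ae (θ : ℝ) (hθ : 0 < θ) (k : ℕ) :
    (fun z : ℝ => Real.sign (|z| - θ) * z ^ k * exp (-z^2/2)) =ᵐ[volume]
    (fun z : ℝ => z ^ k * exp (-z^2/2)
      - 2 * (Ioo (-θ) θ).indicator (fun z => z ^ k * exp (-z^2/2)) z) := by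
  have hnull : (volume : Measure ℝ) ({-θ, θ} : Set ℝ) = 0 :=
    Set.Countable.measure_zero (by simp) _
  filter_upwards [compl_mem_ae_iff.2 hnull] with z hz
  simp only [Set.mem_compl_iff, Set.mem_insert_iff, Set.mem_singleton_iff, not_or] at hz
  rcases lt_trichotomy |z| θ with h | h | h
  · have hmem : z ∈ Ioo (-θ) θ := abs_lt.1 h
    rw [Real.sign_of_neg (by linarith), Set.indicator_of_mem hmem]
    ring
  · exact absurd (abs_eq hθ.le |>.1 h) (by tauto)
  · have hmem : z ∉ Ioo (-θ) θ := by
      rw [Set.mem_Ioo]; rintro ⟨h1, h2⟩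
      exact absurd (abs_lt.2 ⟨h1, h2⟩) (not_lt.2 h.le)
    rw [Real.sign_of_pos (by linarith), Set.indicator_of_notMem hmem]
    ring

lemma gaussMoment_eq (f : ℝ → ℝ) (k : ℕ) :
    gaussMoment f k = (Real.sqrt (2*π))⁻¹ * ∫ z, f z * z ^ k * exp (-z^2/2) := by
  rw [gaussMoment, aux_transfer]
  rw [show (fun z => gaussianPDFReal 0 1 z * (f z * z ^ k))
      = fun z => (Real.sqrt (2*π))⁻¹ * (f z * z ^ k * exp (-z^2/2)) from by
    ext z; rw [pdf01]; ring]
  exact integral_const_mul _ _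

lemma mu_even (θ : ℝ) (hθ : 0 < θ) (k : ℕ)
    (hk : Integrable (fun z : ℝ => z^k * exp (-z^2/2))) :
    gaussMoment (fun z => Real.sign (|z| - θ)) k
      = (Real.sqrt (2*π))⁻¹ * ((∫ z : ℝ, z^k * exp (-z^2/2))
        - 2 * ∫ z in Ioo (-θ) θ, z^k * exp (-z^2/2)) := by
  rw [gaussMoment_eq]
  congr 1
  have h1 : (∫ z : ℝ, (fun z => Real.sign (|z| - θ)) z * z ^ k * exp (-z^2/2))
      = ∫ z : ℝ, (z ^ k * exp (-z^2/2)
        - 2 * (Ioo (-θ) θ).indicator (fun z => z ^ k * exp (-z^2/2)) z) :=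
    integral_congr_ae (sign_eq_ae θ hθ k)
  rw [h1, integral_sub hk ((hk.indicator measurableSet_Ioo).const_mul 2),
      integral_const_mul, integral_indicator measurableSet_Ioo]

lemma mu_odd (θ : ℝ) : gaussMoment (fun z => Real.sign (|z| - θ)) 1 = 0 := by
  rw [gaussMoment_eq]
  have h1 : ∫ x : ℝ, (fun z : ℝ => (fun z => Real.sign (|z| - θ)) z * z ^ 1 * exp (-z^2/2)) (-x)
      = ∫ z : ℝ, (fun z => Real.sign (|z| - θ)) z * z ^ 1 * exp (-z^2/2) :=
    integral_neg_eq_self (fun z : ℝ => (fun z => Real.sign (|z| - θ)) z * z ^ 1 * exp (-z^2/2)) volume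
  have h2 : (fun x : ℝ => (fun z : ℝ => (fun z => Real.sign (|z| - θ)) z * z ^ 1 * exp (-z^2/2)) (-x))
      = fun x : ℝ => -((fun z => Real.sign (|z| - θ)) x * x ^ 1 * exp (-x^2/2)) := by
    ext x; simp only [abs_neg, neg_sq]; ring
  rw [h2, integral_neg] at h1
  have : (∫ z : ℝ, (fun z => Real.sign (|z| - θ)) z * z ^ 1 * exp (-z^2/2)) = 0 := by linarith
  rw [this, mul_zero]

/-- For the one-bit phase retrieval link function `f(z) = sign(|z| − θ)`, `θ > 0`,
with `p₁ = P(|Z| ≥ θ)` for `Z ~ N(0,1)`: `μ₁ = 0`, `φ(f) = μ₀(μ₀ − μ₂)`, and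
`φ(f) = −2(2p₁ − 1)·(2θ/√(2π))·e^{−θ²/2}`. -/
theorem one_bit_phase_retrieval_phi_formula (θ : ℝ) (hθ : 0 < θ) (f : ℝ → ℝ)
    (hf : f = fun z => Real.sign (|z| - θ)) (p₁ : ℝ)
    (hp₁ : p₁ = ((gaussianReal 0 1) {z : ℝ | θ ≤ |z|}).toReal) :
    gaussMoment f 1 = 0 ∧
    phiFun f = gaussMoment f 0 * (gaussMoment f 0 - gaussMoment f 2) ∧
    phiFun f = -2 * (2 * p₁ - 1) * (2 * θ / Real.sqrt (2 * Real.pi))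
        * Real.exp (-θ ^ 2 / 2) := by
  have hsq : (0:ℝ) < Real.sqrt (2*π) := Real.sqrt_pos.2 (by positivity)
  set c : ℝ := (Real.sqrt (2*π))⁻¹ with hc
  set S : ℝ := ∫ z in Ioo (-θ) θ, exp (-z^2/2) with hS
  have hcs : c * Real.sqrt (2*π) = 1 := inv_mul_cancel₀ hsq.ne'
  -- μ₁
  have hmu1 : gaussMoment f 1 = 0 := by rw [hf]; exact mu_odd θ
  -- μ₀
  have hmu0 : gaussMoment f 0 = 1 - 2 * (c * S) := by
    rw [hf]
    have h := mu_even θ hθ 0 (by simpa using intE)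
    simp only [pow_zero, one_mul] at h
    rw [h, integral_E, ← hS, ← hc]
    rw [mul_sub, hcs]; ring
  -- interval piece for μ₂
  have hS2 : (∫ z in Ioo (-θ) θ, z^2 * exp (-z^2/2)) = S - 2*θ*exp (-θ^2/2) := by
    have h := integral_Ioo_one_sub_sq θ hθ
    rw [show (fun z:ℝ => (1 - z^2) * exp (-z^2/2))
        = fun z => exp (-z^2/2) - z^2*exp (-z^2/2) from by ext z; ring] at h
    rw [integral_sub intE.integrableOn intE2.integrableOn] at h
    rw [← hS] at h
    linarith
  -- μ₂
  have hmu2 : gaussMoment f 2 = 1 - 2 * (c * S) + 4 * c * θ * exp (-θ^2/2) := by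
    rw [hf]
    have h := mu_even θ hθ 2 intE2
    rw [h, integral_sq_E, hS2, ← hc]
    have e2 : c * (Real.sqrt (2*π) - 2*(S - 2*θ*exp (-θ^2/2)))
        = c * Real.sqrt (2*π) - 2*(c*S) + 4*c*θ*exp (-θ^2/2) := by ring
    rw [e2, hcs]
  -- p₁
  have hM : MeasurableSet {z : ℝ | θ ≤ |z|} :=
    measurableSet_le measurable_const (measurable_id.abs)
  have hcompl : {z : ℝ | θ ≤ |z|}ᶜ = Ioo (-θ) θ := by
    ext z; simp [not_le, abs_lt]
  have hp : p₁ = 1 - c * S := by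
    rw [hp₁, gaussianReal_apply_eq_integral 0 one_ne_zero,
      ENNReal.toReal_ofReal (setIntegral_nonneg hM fun z _ => gaussianPDFReal_nonneg 0 1 z)]
    have hadd := integral_add_compl hM (integrable_gaussianPDFReal 0 1)
    rw [integral_gaussianPDFReal_eq_one 0 one_ne_zero] at hadd
    have h2 : (∫ z in {z : ℝ | θ ≤ |z|}ᶜ, gaussianPDFReal 0 1 z) = c * S := by
      rw [hcompl]
      calc (∫ z in Ioo (-θ) θ, gaussianPDFReal 0 1 z)
          = ∫ z in Ioo (-θ) θ, c * exp (-z^2/2) := by simp only [pdf01, hc]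
        _ = c * S := by rw [hS]; exact integral_const_mul _ _
    rw [h2] at hadd
    linarith
  refine ⟨hmu1, ?_, ?_⟩
  · rw [phiFun, hmu1]; ring
  · rw [phiFun, hmu1, hmu0, hmu2, hp]
    have e1 : 2 * θ / Real.sqrt (2*π) = 2 * θ * c := by rw [hc]; ring
    rw [e1]; ring
end

section
/- There exists an absolute constant c > 0 such that for all integers p and s with 1 ≤ s ≤ p/4, there is a finite subset Q ⊆ {0,1}^p satisfying: (i) every θ ∈ Q has exactly s coordinates equal to 1 (‖θ‖₀ = s); (ii) any two distinct θ, θ' ∈ Q have Hamming distance δ(θ, θ') > s/2; and (iii) log|Q| ≥ c·s·log(p/s). -/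
open Finset

private lemma sum_choose_le_aux (n k : ℕ) :
    ∑ j ∈ range (k+1), n.choose j ≤ (n+k).choose k := by
  induction k with
  | zero => simp
  | succ k ih =>
    rw [Finset.sum_range_succ]
    have h1 : n.choose (k+1) ≤ (n+k).choose (k+1) := Nat.choose_le_choose _ (by omega)
    have h2 : (n+k+1).choose (k+1) = (n+k).choose k + (n+k).choose (k+1) :=
      Nat.choose_succ_succ (n+k) k
    have h3 : (n + (k+1)).choose (k+1) = (n+k+1).choose (k+1) := rfl
    omega

private lemma choose_ratio_aux (p s k : ℕ) (hs : s ≤ p) :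
    ∀ i, k + i ≤ s → p.choose k * (p - s)^i ≤ p.choose (k + i) * s^i := by
  intro i
  induction i with
  | zero => simp
  | succ i ih =>
    intro h
    have hih := ih (by omega)
    have key : p.choose (k+i) * (p - s) ≤ p.choose (k+i+1) * s := by
      have h1 : p.choose (k+i+1) * (k+i+1) = p.choose (k+i) * (p - (k+i)) :=
        Nat.choose_succ_right_eq p (k+i)
      have h2 : p - s ≤ p - (k+i) := by omega
      have h3 : k+i+1 ≤ s := by omega
      calc p.choose (k+i) * (p - s) ≤ p.choose (k+i) * (p - (k+i)) :=
            Nat.mul_le_mul_left _ h2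
        _ = p.choose (k+i+1) * (k+i+1) := h1.symm
        _ ≤ p.choose (k+i+1) * s := Nat.mul_le_mul_left _ h3
    calc p.choose k * (p-s)^(i+1) = (p.choose k * (p-s)^i) * (p-s) := by ring
      _ ≤ (p.choose (k+i) * s^i) * (p-s) := Nat.mul_le_mul_right _ hih
      _ = (p.choose (k+i) * (p-s)) * s^i := by ring
      _ ≤ (p.choose (k+i+1) * s) * s^i := Nat.mul_le_mul_right _ key
      _ = p.choose (k+(i+1)) * s^(i+1) := by ring_nf

private lemma hamming_split (p s : ℕ) (θ θ' : Fin p → Bool)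
    (hθ : #{j | θ j = true} = s) (hθ' : #{j | θ' j = true} = s) :
    hammingDist θ θ' =
      2 * #(({j | θ' j = true} : Finset (Fin p)) \ ({j | θ j = true} : Finset (Fin p))) := by
  classical
  set T : Finset (Fin p) := {j | θ j = true} with hT
  set T' : Finset (Fin p) := {j | θ' j = true} with hT'
  have hsplit : ({j | θ j ≠ θ' j} : Finset (Fin p)) = (T \ T') ∪ (T' \ T) := by
    ext j
    simp only [hT, hT', Finset.mem_union, Finset.mem_sdiff, Finset.mem_filter,
      Finset.mem_univ, true_and]
    cases hθj : θ j <;> cases hθ'j : θ' j <;> simp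
  have hdisj : Disjoint (T \ T') (T' \ T) := disjoint_sdiff_sdiff
  have hdist : hammingDist θ θ' = #(T \ T') + #(T' \ T) := by
    show #({j | θ j ≠ θ' j} : Finset (Fin p)) = _
    rw [hsplit, Finset.card_union_of_disjoint hdisj]
  have h1 : #(T \ T') + #(T ∩ T') = #T := Finset.card_sdiff_add_card_inter T T'
  have h2 : #(T' \ T) + #(T' ∩ T) = #T' := Finset.card_sdiff_add_card_inter T' T
  have h3 : T ∩ T' = T' ∩ T := Finset.inter_comm T T'
  have hTc : #T = s := hθ
  have hT'c : #T' = s := hθ'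
  rw [h3] at h1
  omega

/-- Ball-counting bound. -/
private lemma ball_card_le (p s : ℕ) (hsp : s ≤ p) (θ : Fin p → Bool)
    (hθ : #{j | θ j = true} = s) :
    #((univ : Finset (Fin p → Bool)).filter
        (fun θ' => #{j | θ' j = true} = s ∧ 2 * hammingDist θ θ' ≤ s))
      ≤ 2^s * p.choose (s/4) := by
  classical
  set k := s / 4 with hk
  set T : Finset (Fin p) := {j | θ j = true} with hT
  set B := (univ : Finset (Fin p → Bool)).filter
      (fun θ' => #{j | θ' j = true} = s ∧ 2 * hammingDist θ θ' ≤ s) with hB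
  set Y := Tᶜ.powerset.filter (fun E => #E ≤ k) with hY
  have hinj : #B ≤ #(T.powerset ×ˢ Y) := by
    apply Finset.card_le_card_of_injOn
      (fun θ' => (T \ ({j | θ' j = true} : Finset (Fin p)),
                  ({j | θ' j = true} : Finset (Fin p)) \ T))
    · intro θ' hθ'
      simp only [hB, Finset.mem_coe, Finset.mem_filter, Finset.mem_univ, true_and] at hθ'
      obtain ⟨hw, hd⟩ := hθ'
      set T' : Finset (Fin p) := {j | θ' j = true} with hT'
      have hsplit := hamming_split p s θ θ' hθ hw
      rw [Finset.mem_coe, Finset.mem_product]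
      constructor
      · exact Finset.mem_powerset.mpr (Finset.sdiff_subset)
      · rw [hY, Finset.mem_filter, Finset.mem_powerset]
        refine ⟨?_, ?_⟩
        · show T' \ T ⊆ Tᶜ
          intro j hj
          rw [Finset.mem_compl]
          exact (Finset.mem_sdiff.mp hj).2
        · show #(T' \ T) ≤ k
          rw [← hT', ← hT] at hsplit
          omega
    · intro θ'₁ h1 θ'₂ h2 heq
      simp only [Prod.mk.injEq] at heq
      obtain ⟨e1, e2⟩ := heq
      have hTeq : Finset.filter (fun j => θ'₁ j = true) Finset.univ
          = Finset.filter (fun j => θ'₂ j = true) Finset.univ := by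
        ext j
        by_cases hjT : j ∈ T
        · have f1 := Finset.ext_iff.mp e1 j
          simp only [Finset.mem_sdiff, hjT, true_and] at f1
          tauto
        · have f2 := Finset.ext_iff.mp e2 j
          simp only [Finset.mem_sdiff, and_iff_left hjT] at f2
          exact f2
      funext j
      have := Finset.ext_iff.mp hTeq j
      simp only [Finset.mem_filter, Finset.mem_univ, true_and] at this
      cases hb1 : θ'₁ j <;> cases hb2 : θ'₂ j <;> simp_all
  have hcardY : #Y ≤ (p - s + k).choose k := by
    have hsub : Y ⊆ (range (k+1)).biUnion (fun j => Finset.powersetCard j Tᶜ) := by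
      intro E hE
      rw [hY, Finset.mem_filter, Finset.mem_powerset] at hE
      rw [Finset.mem_biUnion]
      exact ⟨#E, Finset.mem_range.mpr (by omega),
        Finset.mem_powersetCard.mpr ⟨hE.1, rfl⟩⟩
    have hTc : #(Tᶜ) = p - s := by
      rw [Finset.card_compl, hθ]
      simp
    calc #Y ≤ #((range (k+1)).biUnion (fun j => Finset.powersetCard j Tᶜ)) :=
          Finset.card_le_card hsub
      _ ≤ ∑ j ∈ range (k+1), #(Finset.powersetCard j Tᶜ) := Finset.card_biUnion_le
      _ = ∑ j ∈ range (k+1), (p - s).choose j := by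
          simp [Finset.card_powersetCard, hTc]
      _ ≤ (p - s + k).choose k := sum_choose_le_aux (p - s) k
  have hchk : (p - s + k).choose k ≤ p.choose k :=
    Nat.choose_le_choose _ (by omega)
  calc #B ≤ #(T.powerset ×ˢ Y) := hinj
    _ = #T.powerset * #Y := Finset.card_product _ _
    _ = 2^s * #Y := by rw [Finset.card_powerset, hθ]
    _ ≤ 2^s * p.choose k := Nat.mul_le_mul_left _ (le_trans hcardY hchk)

set_option maxHeartbeats 1000000 in
/-- There is an absolute constant `c > 0` such that for all `p, s` with
`1 ≤ s ≤ p/4` there is a finite set `Q ⊆ {0,1}^p` in which every element has exactly `s`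
ones, distinct elements are at Hamming distance greater than `s/2`, and
`log|Q| ≥ c·s·log(p/s)`. -/
theorem packing_set_exists :
    ∃ c : ℝ, 0 < c ∧ ∀ p s : ℕ, 1 ≤ s → (s : ℝ) ≤ (p : ℝ) / 4 →
      ∃ Q : Finset (Fin p → Bool),
        (∀ θ ∈ Q, #{j | θ j = true} = s) ∧
        (∀ θ ∈ Q, ∀ θ' ∈ Q, θ ≠ θ' → (s : ℝ) / 2 < (hammingDist θ θ' : ℝ)) ∧
        c * s * Real.log ((p : ℝ) / s) ≤ Real.log (Q.card : ℝ) := by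
  classical
  refine ⟨1/20, by norm_num, fun p s hs1 hs4 => ?_⟩
  have hps : 4 * s ≤ p := by
    have : (4 * s : ℝ) ≤ p := by linarith
    exact_mod_cast this
  have hsp : s ≤ p := by omega
  set k := s / 4 with hk
  set A := (univ : Finset (Fin p → Bool)).filter (fun θ => #{j | θ j = true} = s) with hA
  set F := A.powerset.filter
      (fun Q => ∀ θ ∈ Q, ∀ θ' ∈ Q, θ ≠ θ' → s < 2 * hammingDist θ θ') with hF
  have hFne : F.Nonempty := ⟨∅, by simp [hF]⟩
  obtain ⟨Q, hQF, hQmax⟩ := F.exists_max_image (fun Q => #Q) hFne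
  rw [hF, Finset.mem_filter, Finset.mem_powerset] at hQF
  obtain ⟨hQA, hQgood⟩ := hQF
  -- covering property from maximality
  have hcov : ∀ θ' ∈ A, ∃ θ ∈ Q, 2 * hammingDist θ θ' ≤ s := by
    intro θ' hθ'
    by_contra hcon
    push_neg at hcon
    have hnotmem : θ' ∉ Q := by
      intro h
      have := hcon θ' h
      rw [hammingDist_self] at this
      omega
    have hins : insert θ' Q ∈ F := by
      rw [hF, Finset.mem_filter, Finset.mem_powerset]
      refine ⟨Finset.insert_subset hθ' hQA, ?_⟩
      intro a ha b hb hne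
      rcases Finset.mem_insert.mp ha with ha' | ha' <;>
        rcases Finset.mem_insert.mp hb with hb' | hb'
      · exact absurd (ha'.trans hb'.symm) hne
      · subst ha'
        have := hcon b hb'
        rwa [hammingDist_comm] at this
      · subst hb'
        exact hcon a ha'
      · exact hQgood a ha' b hb' hne
    have := hQmax _ hins
    rw [Finset.card_insert_of_notMem hnotmem] at this
    omega
  -- lower bound on #A
  have hA_lb : p.choose s ≤ #A := by
    have : #(Finset.powersetCard s (univ : Finset (Fin p))) ≤ #A := by
      apply Finset.card_le_card_of_injOn (fun S => fun j => decide (j ∈ S))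
      · intro S hS
        rw [Finset.mem_coe, Finset.mem_powersetCard] at hS
        rw [Finset.mem_coe, hA, Finset.mem_filter]
        refine ⟨Finset.mem_univ _, ?_⟩
        rw [← hS.2]
        congr 1
        ext j
        simp
      · intro S1 h1 S2 h2 heq
        ext j
        have := congrFun heq j
        simpa using this
    rwa [Finset.card_powersetCard, Finset.card_univ, Fintype.card_fin] at this
  -- main counting inequality
  have hcount : p.choose s ≤ #Q * (2^s * p.choose k) := by
    have hsub : A ⊆ Q.biUnion (fun θ => (univ : Finset (Fin p → Bool)).filter
        (fun θ' => #{j | θ' j = true} = s ∧ 2 * hammingDist θ θ' ≤ s)) := by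
      intro θ' hθ'
      obtain ⟨θ, hθQ, hθd⟩ := hcov θ' hθ'
      rw [Finset.mem_biUnion]
      refine ⟨θ, hθQ, ?_⟩
      rw [Finset.mem_filter]
      rw [hA, Finset.mem_filter] at hθ'
      exact ⟨Finset.mem_univ _, hθ'.2, hθd⟩
    calc p.choose s ≤ #A := hA_lb
      _ ≤ #(Q.biUnion _) := Finset.card_le_card hsub
      _ ≤ ∑ θ ∈ Q, #((univ : Finset (Fin p → Bool)).filter
            (fun θ' => #{j | θ' j = true} = s ∧ 2 * hammingDist θ θ' ≤ s)) :=
          Finset.card_biUnion_le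
      _ ≤ ∑ θ ∈ Q, 2^s * p.choose k := by
          apply Finset.sum_le_sum
          intro θ hθQ
          have hw : #{j | θ j = true} = s := by
            have := hQA hθQ
            rw [hA, Finset.mem_filter] at this
            exact this.2
          exact ball_card_le p s hsp θ hw
      _ = #Q * (2^s * p.choose k) := by rw [Finset.sum_const, smul_eq_mul]
  refine ⟨Q, ?_, ?_, ?_⟩
  · intro θ hθ
    have := hQA hθ
    rw [hA, Finset.mem_filter] at this
    exact this.2
  · intro θ hθ θ' hθ' hne
    have := hQgood θ hθ θ' hθ' hne
    have : (s : ℝ) < 2 * hammingDist θ θ' := by exact_mod_cast this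
    linarith
  -- the log estimate
  · have hchs_pos : 0 < p.choose s := Nat.choose_pos hsp
    have hchk_pos : 0 < p.choose k := Nat.choose_pos (by omega)
    have hQpos : 0 < #Q := by
      rcases Nat.eq_zero_or_pos #Q with h | h
      · exfalso
        rw [h] at hcount
        simp only [Nat.zero_mul, Nat.le_zero] at hcount
        omega
      · exact h
    -- ratio inequality
    have hratioN : p.choose k * (p - s)^(s - k) ≤ p.choose s * s^(s - k) := by
      have := choose_ratio_aux p s k hsp (s - k) (by omega)
      rwa [Nat.add_sub_cancel' (by omega : k ≤ s)] at this
    -- move to reals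
    have hspR : (s : ℝ) ≤ p := by exact_mod_cast hsp
    have hs1R : (1 : ℝ) ≤ s := by exact_mod_cast hs1
    have hpsR : 4 * (s:ℝ) ≤ p := by exact_mod_cast hps
    have hsposR : (0:ℝ) < s := by linarith
    have hpposR : (0:ℝ) < p := by linarith
    have hpmsR : ((p - s : ℕ) : ℝ) = (p:ℝ) - s := by
      rw [Nat.cast_sub hsp]
    have hpms_pos : (0:ℝ) < (p:ℝ) - s := by linarith
    -- log of counting inequality
    have hcountR : (p.choose s : ℝ) ≤ (#Q : ℝ) * (2^s * (p.choose k : ℝ)) := by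
      exact_mod_cast hcount
    have hlog1 : Real.log (p.choose s) ≤
        Real.log (#Q : ℝ) + (s * Real.log 2 + Real.log (p.choose k)) := by
      have hpos : (0:ℝ) < (#Q : ℝ) * (2^s * (p.choose k : ℝ)) := by positivity
      have := Real.log_le_log (by exact_mod_cast hchs_pos) hcountR
      rwa [Real.log_mul (by positivity) (by positivity),
        Real.log_mul (by positivity) (by positivity), Real.log_pow] at this
    -- log of ratio inequality
    have hratioR : (p.choose k : ℝ) * ((p:ℝ) - s)^(s - k) ≤
        (p.choose s : ℝ) * (s:ℝ)^(s - k) := by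
      have : ((p.choose k * (p - s)^(s - k) : ℕ) : ℝ) ≤
          ((p.choose s * s^(s - k) : ℕ) : ℝ) := by exact_mod_cast hratioN
      push_cast at this
      rwa [hpmsR] at this
    have hlog2 : Real.log (p.choose k) + ((s - k : ℕ) : ℝ) * Real.log ((p:ℝ) - s) ≤
        Real.log (p.choose s) + ((s - k : ℕ) : ℝ) * Real.log s := by
      have := Real.log_le_log (by positivity) hratioR
      rwa [Real.log_mul (by positivity) (by positivity),
        Real.log_mul (by positivity) (by positivity),
        Real.log_pow, Real.log_pow] at this
    -- numeric bounds
    have hkle : (k : ℝ) ≤ (s:ℝ)/4 := by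
      have h4k : 4 * k ≤ s := by omega
      have : (4 * k : ℝ) ≤ s := by exact_mod_cast h4k
      linarith
    have hskR : (3/4 : ℝ) * s ≤ ((s - k : ℕ) : ℝ) := by
      have : ((s - k : ℕ) : ℝ) = (s:ℝ) - k := by
        rw [Nat.cast_sub (by omega : k ≤ s)]
      rw [this]
      linarith
    have hL : 2 * Real.log 2 ≤ Real.log p - Real.log s := by
      have h4s : Real.log (4 * s) ≤ Real.log p := Real.log_le_log (by linarith) hpsR
      rw [Real.log_mul (by norm_num) (by linarith)] at h4s
      have h4 : Real.log 4 = 2 * Real.log 2 := by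
        rw [show (4:ℝ) = 2^2 by norm_num, Real.log_pow]
        push_cast; ring
      linarith
    have hlogps : Real.log p ≤ Real.log ((p:ℝ) - s) + 1/3 := by
      have hdiv : Real.log ((p:ℝ) / ((p:ℝ) - s)) ≤ (p:ℝ)/((p:ℝ)-s) - 1 :=
        Real.log_le_sub_one_of_pos (by positivity)
      have hfrac : (p:ℝ)/((p:ℝ)-s) - 1 ≤ 1/3 := by
        rw [div_sub_one (by linarith), div_le_div_iff₀ (by linarith) (by norm_num)]
        linarith
      rw [Real.log_div (by linarith) (by linarith)] at hdiv
      linarith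
    have hDpos : 0 ≤ Real.log ((p:ℝ) - s) - Real.log s := by
      have : Real.log s ≤ Real.log ((p:ℝ) - s) := Real.log_le_log hsposR (by linarith)
      linarith
    -- assemble
    rw [Real.log_div (by linarith) (by linarith)]
    have hmain : ((s - k : ℕ) : ℝ) * (Real.log ((p:ℝ) - s) - Real.log s)
        - s * Real.log 2 ≤ Real.log (#Q : ℝ) := by nlinarith [hlog1, hlog2]
    have hlb : (3/4:ℝ) * s * (Real.log ((p:ℝ) - s) - Real.log s) ≤
        ((s - k : ℕ) : ℝ) * (Real.log ((p:ℝ) - s) - Real.log s) := by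
      apply mul_le_mul_of_nonneg_right _ hDpos
      exact hskR
    have hD_lb : Real.log p - Real.log s - 1/3 ≤
        Real.log ((p:ℝ) - s) - Real.log s := by linarith
    have m3 : (3/4:ℝ) * s * (Real.log p - Real.log s - 1/3) ≤
        (3/4:ℝ) * s * (Real.log ((p:ℝ) - s) - Real.log s) := by
      apply mul_le_mul_of_nonneg_left hD_lb (by linarith : (0:ℝ) ≤ (3/4:ℝ) * s)
    have m4 : (s:ℝ) * (2 * Real.log 2) ≤ (s:ℝ) * (Real.log p - Real.log s) :=
      mul_le_mul_of_nonneg_left hL (by linarith : (0:ℝ) ≤ (s:ℝ))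
    have m5 : (0.6931471803 : ℝ) * s ≤ Real.log 2 * s :=
      mul_le_mul_of_nonneg_right (le_of_lt Real.log_two_gt_d9)
        (by linarith : (0:ℝ) ≤ (s:ℝ))
    linarith [hmain, hlb, m3, m4, m5]
end

section
/- Let s ≥ 2, ξ ∈ (0,1), and let Q ⊆ {0,1}^{p−1} be a set such that every w ∈ Q has exactly s−1 ones and any two distinct w, w' ∈ Q have Hamming distance greater than (s−1)/2. Define Q̄ = { β ∈ ℝ^p : β = (√(1−ξ²), (ξ/√(s−1))·w) for some w ∈ Q }. Then: (i) every θ ∈ Q̄ satisfies ‖θ‖₂ = 1 and ‖θ‖₀ = s; (ii) any two distinct θ, θ' ∈ Q̄ satisfy (√2/2)·ξ ≤ ‖θ − θ'‖₂ ≤ √2·ξ; and (iii) |Q̄| = |Q|. -/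
open Finset

open Classical in
/-- Let `s ≥ 2`, `ξ ∈ (0,1)`, and let `Q ⊆ {0,1}^p` be such that every `w ∈ Q`
has exactly `s−1` ones and distinct elements of `Q` are at Hamming distance `> (s−1)/2`.
Let `Q̄ ⊆ ℝ^{p+1}` consist of the vectors `β = (√(1−ξ²), (ξ/√(s−1))·w)`, `w ∈ Q`. Then
(i) every `θ ∈ Q̄` has unit Euclidean norm and exactly `s` nonzero coordinates;
(ii) distinct `θ, θ' ∈ Q̄` satisfy `(√2/2)·ξ ≤ ‖θ − θ'‖₂ ≤ √2·ξ`; (iii) `|Q̄| = |Q|`. -/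
theorem sparse_packing_lift (p s : ℕ) (hs : 2 ≤ s) (ξ : ℝ) (hξ0 : 0 < ξ) (hξ1 : ξ < 1)
    (Q : Finset (Fin p → Bool))
    (hones : ∀ w ∈ Q, #{j | w j = true} = s - 1)
    (hdist : ∀ w ∈ Q, ∀ w' ∈ Q, w ≠ w' → ((s : ℝ) - 1) / 2 < (hammingDist w w' : ℝ))
    (Qbar : Finset (Fin (p + 1) → ℝ))
    (hQbar : Qbar = Q.image (fun w => Fin.cons (Real.sqrt (1 - ξ ^ 2))
      (fun j => (ξ / Real.sqrt ((s : ℝ) - 1)) * (if w j then 1 else 0)))) :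
    (∀ θ ∈ Qbar, Real.sqrt (∑ i, θ i ^ 2) = 1 ∧ #{i | θ i ≠ 0} = s) ∧
    (∀ θ ∈ Qbar, ∀ θ' ∈ Qbar, θ ≠ θ' →
      Real.sqrt 2 / 2 * ξ ≤ Real.sqrt (∑ i, (θ i - θ' i) ^ 2) ∧
      Real.sqrt (∑ i, (θ i - θ' i) ^ 2) ≤ Real.sqrt 2 * ξ) ∧
    Qbar.card = Q.card := by
  have hs2 : (2:ℝ) ≤ (s:ℝ) := by exact_mod_cast hs
  have hs1 : (1:ℝ) ≤ (s:ℝ) - 1 := by linarith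
  set c : ℝ := ξ / Real.sqrt ((s:ℝ) - 1) with hc_def
  have hsqrt_pos : 0 < Real.sqrt ((s:ℝ) - 1) := Real.sqrt_pos.2 (by linarith)
  have hc_pos : 0 < c := div_pos hξ0 hsqrt_pos
  have hc2 : c ^ 2 = ξ ^ 2 / ((s:ℝ) - 1) := by
    rw [hc_def, div_pow, Real.sq_sqrt (by linarith)]
  have hξsq : 0 < 1 - ξ ^ 2 := by nlinarith
  have hsqrt1 : Real.sqrt (1 - ξ ^ 2) ≠ 0 := ne_of_gt (Real.sqrt_pos.2 hξsq)
  set f : (Fin p → Bool) → (Fin (p+1) → ℝ) :=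
    fun w => Fin.cons (Real.sqrt (1 - ξ ^ 2)) (fun j => c * (if w j then 1 else 0)) with hf
  have hinj : Function.Injective f := by
    intro w w' h
    funext j
    have h1 := congrFun h j.succ
    simp only [hf, Fin.cons_succ] at h1
    have h2 : (if w j then (1:ℝ) else 0) = (if w' j then 1 else 0) :=
      mul_left_cancel₀ (ne_of_gt hc_pos) h1
    revert h2; cases w j <;> cases w' j <;> norm_num
  -- cast of s - 1
  have hcast : ((s - 1 : ℕ) : ℝ) = (s:ℝ) - 1 := by
    have : 1 ≤ s := by omega
    push_cast [this]; ring
  -- sum of indicator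
  have hind : ∀ w ∈ Q, ∑ j : Fin p, (if w j then (1:ℝ) else 0) = (s:ℝ) - 1 := by
    intro w hw
    rw [Finset.sum_boole]
    rw [← hcast]
    norm_cast
    rw [← hones w hw]
  -- norm computation
  have hsum : ∀ w ∈ Q, ∑ i, (f w i) ^ 2 = 1 := by
    intro w hw
    simp only [hf]
    rw [Fin.sum_univ_succ]
    simp only [Fin.cons_zero, Fin.cons_succ]
    rw [Real.sq_sqrt (le_of_lt hξsq)]
    have h2 : ∀ j : Fin p, (c * (if w j then (1:ℝ) else 0)) ^ 2
        = c ^ 2 * (if w j then 1 else 0) := by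
      intro j; by_cases h : w j <;> simp [h] <;> ring
    rw [Finset.sum_congr rfl (fun j _ => h2 j), ← Finset.mul_sum, hind w hw, hc2]
    field_simp
    ring
  -- support
  have hsupp : ∀ w ∈ Q, #{i | f w i ≠ 0} = s := by
    intro w hw
    rw [Finset.card_filter, Fin.sum_univ_succ]
    simp only [hf, Fin.cons_zero, Fin.cons_succ]
    rw [if_pos hsqrt1]
    have h2 : ∀ j : Fin p, (if c * (if w j then (1:ℝ) else 0) ≠ 0 then 1 else 0)
        = (if w j = true then 1 else 0) := by
      intro j; by_cases h : w j <;> simp [h, ne_of_gt hc_pos]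
    rw [Finset.sum_congr rfl (fun j _ => h2 j), ← Finset.card_filter]
    have := hones w hw
    rw [show ({j | w j = true} : Finset (Fin p)) = Finset.univ.filter (fun j => w j = true)
      from rfl] at this
    rw [Finset.filter_congr_decidable] at this ⊢
    omega
  -- distance sum
  have hdsum : ∀ w w', ∑ i, (f w i - f w' i) ^ 2 = c ^ 2 * (hammingDist w w' : ℝ) := by
    intro w w'
    simp only [hf]
    rw [Fin.sum_univ_succ]
    simp only [Fin.cons_zero, Fin.cons_succ, sub_self]
    have h2 : ∀ j : Fin p, (c * (if w j then (1:ℝ) else 0) - c * (if w' j then 1 else 0)) ^ 2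
        = c ^ 2 * (if w j ≠ w' j then 1 else 0) := by
      intro j; by_cases h : w j <;> by_cases h' : w' j <;> simp [h, h'] <;> ring
    rw [Finset.sum_congr rfl (fun j _ => h2 j), ← Finset.mul_sum, Finset.sum_boole]
    rw [hammingDist]
    norm_num
  -- hamming upper bound
  have hdub : ∀ w ∈ Q, ∀ w' ∈ Q, (hammingDist w w' : ℝ) ≤ 2 * ((s:ℝ) - 1) := by
    intro w hw w' hw'
    have hsub : (Finset.univ.filter fun j => w j ≠ w' j) ⊆
        (Finset.univ.filter fun j => w j = true) ∪ (Finset.univ.filter fun j => w' j = true) := by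
      intro j hj
      simp only [Finset.mem_filter, Finset.mem_union, Finset.mem_univ, true_and] at hj ⊢
      by_contra hcon
      push_neg at hcon
      exact hj (by simp [hcon.1, hcon.2])
    have h1 : hammingDist w w' ≤ (s - 1) + (s - 1) := by
      have := (Finset.card_le_card hsub).trans (Finset.card_union_le _ _)
      rw [hammingDist]
      have e1 := hones w hw
      have e2 := hones w' hw'
      rw [show ({j | w j = true} : Finset (Fin p)) = Finset.univ.filter (fun j => w j = true)
        from rfl, Finset.filter_congr_decidable] at e1
      rw [show ({j | w' j = true} : Finset (Fin p)) = Finset.univ.filter (fun j => w' j = true)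
        from rfl, Finset.filter_congr_decidable] at e2
      omega
    have : ((hammingDist w w' : ℕ) : ℝ) ≤ (((s-1) + (s-1) : ℕ) : ℝ) := by exact_mod_cast h1
    calc (hammingDist w w' : ℝ) ≤ (((s-1) + (s-1) : ℕ) : ℝ) := this
      _ = 2 * ((s:ℝ) - 1) := by push_cast [show 1 ≤ s by omega]; ring
  subst hQbar
  refine ⟨?_, ?_, Finset.card_image_of_injective Q hinj⟩
  · intro θ hθ
    obtain ⟨w, hw, rfl⟩ := Finset.mem_image.1 hθ
    exact ⟨by rw [hsum w hw]; exact Real.sqrt_one, hsupp w hw⟩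
  · intro θ hθ θ' hθ' hne
    obtain ⟨w, hw, rfl⟩ := Finset.mem_image.1 hθ
    obtain ⟨w', hw', rfl⟩ := Finset.mem_image.1 hθ'
    have hwne : w ≠ w' := fun h => hne (by rw [h])
    have hd := hdist w hw w' hw' hwne
    have hkey : ∑ i, (f w i - f w' i) ^ 2 = c ^ 2 * (hammingDist w w' : ℝ) := hdsum w w'
    constructor
    · rw [hkey]
      rw [show Real.sqrt 2 / 2 * ξ = Real.sqrt (ξ ^ 2 / 2) by
        rw [Real.sqrt_div (by positivity : (0:ℝ) ≤ ξ ^ 2), Real.sqrt_sq hξ0.le]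
        have h2 : Real.sqrt 2 * Real.sqrt 2 = 2 := Real.mul_self_sqrt (by norm_num)
        have h3 : Real.sqrt 2 > 0 := Real.sqrt_pos.2 (by norm_num)
        field_simp
        nlinarith]
      apply Real.sqrt_le_sqrt
      rw [hc2]
      rw [div_mul_eq_mul_div, le_div_iff₀ (by linarith)]
      nlinarith
    · rw [hkey]
      rw [show Real.sqrt 2 * ξ = Real.sqrt (2 * ξ ^ 2) by
        rw [Real.sqrt_mul (by norm_num), Real.sqrt_sq hξ0.le]]
      apply Real.sqrt_le_sqrt
      rw [hc2, div_mul_eq_mul_div, div_le_iff₀ (by linarith)]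
      have := hdub w hw w' hw'
      nlinarith
end
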